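/- arXiv:1506.01758 — 4 statements merged into one kernel-verified Lean document; each statement's English description precedes it below -/
import Mathlib

section
/- If −Δζ = V·ζ on ℝⁿ with ζ > 0 of class C², V continuous, then for every compactly supported C¹ function φ: ∫ V·φ² ≤ ∫ ‖∇φ‖². -/
open MeasureTheory

noncomputable def lap {n : ℕ} (f : EuclideanSpace ℝ (Fin n) → ℝ)
    (x : EuclideanSpace ℝ (Fin n)) : ℝ :=
  ∑ i : Fin n,
    fderiv ℝ (fun y => fderiv ℝ f y (EuclideanSpace.single i 1)) x
      (EuclideanSpace.single i 1)

theorem scalar_stability_inequality {n : ℕ}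
    (ζ V : EuclideanSpace ℝ (Fin n) → ℝ)
    (hζ : ContDiff ℝ 2 ζ) (hζpos : ∀ x, 0 < ζ x) (hV : Continuous V)
    (heq : ∀ x, -lap ζ x = V x * ζ x)
    (φ : EuclideanSpace ℝ (Fin n) → ℝ)
    (hφ : ContDiff ℝ 1 φ) (hφc : HasCompactSupport φ) :
    (∫ x, V x * φ x ^ 2) ≤ ∫ x, ‖gradient φ x‖ ^ 2 := by
  classical
  have hζd : Differentiable ℝ ζ := hζ.differentiable two_ne_zero
  have hφd : Differentiable ℝ φ := hφ.differentiable one_ne_zero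
  have hζne : ∀ x, ζ x ≠ 0 := fun x => (hζpos x).ne'
  set e : Fin n → EuclideanSpace ℝ (Fin n) := fun i => EuclideanSpace.single i 1 with he
  set ψ : EuclideanSpace ℝ (Fin n) → ℝ := fun x => φ x ^ 2 / ζ x with hψdef
  have hψ : ContDiff ℝ 1 ψ := (hφ.pow 2).div (hζ.of_le one_le_two) hζne
  have hψd : Differentiable ℝ ψ := hψ.differentiable one_ne_zero
  have hψc : HasCompactSupport ψ := by
    apply hφc.mono
    intro x hx
    simp only [Function.mem_support] at hx ⊢
    intro h
    apply hx
    simp [hψdef, h]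
  -- partial derivatives of ζ
  set g : Fin n → EuclideanSpace ℝ (Fin n) → ℝ := fun i x => fderiv ℝ ζ x (e i) with hgdef
  have hgC : ∀ i, ContDiff ℝ 1 (g i) := fun i =>
    (hζ.fderiv_right (m := 1) (by norm_num)).clm_apply contDiff_const
  have hgd : ∀ i, Differentiable ℝ (g i) := fun i => (hgC i).differentiable one_ne_zero
  have hgcont : ∀ i, Continuous (g i) := fun i => (hgC i).continuous
  have hg'cont : ∀ i, Continuous (fun x => fderiv ℝ (g i) x (e i)) := fun i =>
    (((hgC i).fderiv_right (m := 0) (by norm_num)).clm_apply contDiff_const).continuous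
  have hψ'cont : ∀ i, Continuous (fun x => fderiv ℝ ψ x (e i)) := fun i =>
    ((hψ.fderiv_right (m := 0) (by norm_num)).clm_apply contDiff_const).continuous
  have hψ'c : ∀ i, HasCompactSupport (fun x => fderiv ℝ ψ x (e i)) := fun i =>
    hψc.fderiv_apply ℝ (e i)
  -- integrability
  have hint1 : ∀ i, Integrable (fun x => ψ x * fderiv ℝ (g i) x (e i)) := fun i =>
    (hψ.continuous.mul (hg'cont i)).integrable_of_hasCompactSupport hψc.mul_right
  have hint2 : ∀ i, Integrable (fun x => fderiv ℝ ψ x (e i) * g i x) := fun i =>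
    ((hψ'cont i).mul (hgcont i)).integrable_of_hasCompactSupport (hψ'c i).mul_right
  have hint3 : ∀ i, Integrable (fun x => ψ x * g i x) := fun i =>
    (hψ.continuous.mul (hgcont i)).integrable_of_hasCompactSupport hψc.mul_right
  -- integration by parts in each direction
  have ibp : ∀ i, ∫ x, ψ x * fderiv ℝ (g i) x (e i) = - ∫ x, fderiv ℝ ψ x (e i) * g i x :=
    fun i => integral_mul_fderiv_eq_neg_fderiv_mul_of_integrable (hint2 i) (hint1 i) (hint3 i)
      (fun x _ => hψd x) (fun x _ => hgd i x)
  -- rewrite the left side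
  have hVψ : ∀ x, V x * φ x ^ 2 = -(ψ x * lap ζ x) := by
    intro x
    have h := heq x
    have hl : lap ζ x = -(V x * ζ x) := by linarith
    have hz : ζ x ≠ 0 := hζne x
    rw [hψdef, hl]
    field_simp
  have step1 : ∫ x, V x * φ x ^ 2 = - ∫ x, ψ x * lap ζ x := by
    calc ∫ x, V x * φ x ^ 2 = ∫ x, -(ψ x * lap ζ x) := by simp_rw [hVψ]
    _ = - ∫ x, ψ x * lap ζ x := integral_neg _
  have step2 : ∫ x, ψ x * lap ζ x = ∑ i, ∫ x, ψ x * fderiv ℝ (g i) x (e i) := by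
    rw [← integral_finset_sum _ (fun i _ => hint1 i)]
    congr 1
    funext x
    rw [lap, Finset.mul_sum]
  have step3 : ∫ x, V x * φ x ^ 2 = ∫ x, ∑ i, fderiv ℝ ψ x (e i) * g i x := by
    rw [step1, step2]
    simp only [ibp]
    rw [Finset.sum_neg_distrib, neg_neg]
    exact (integral_finset_sum _ (fun i _ => hint2 i)).symm
  -- gradient integrand
  have hgradcont : Continuous (gradient φ) := by
    show Continuous fun x => (InnerProductSpace.toDual ℝ _).symm (fderiv ℝ φ x)
    exact (LinearIsometryEquiv.continuous _).comp (hφ.continuous_fderiv one_ne_zero)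
  have hgradc : HasCompactSupport (fun x => ‖gradient φ x‖ ^ 2) := by
    apply (hφc.fderiv ℝ).mono
    intro x hx
    simp only [Function.mem_support] at hx ⊢
    intro h
    apply hx
    show ‖(InnerProductSpace.toDual ℝ _).symm (fderiv ℝ φ x)‖ ^ 2 = 0
    rw [h]
    simp
  have hgradint : Integrable (fun x => ‖gradient φ x‖ ^ 2) :=
    (hgradcont.norm.pow 2).integrable_of_hasCompactSupport hgradc
  -- pointwise inequality
  have hpt : ∀ x, ∑ i, fderiv ℝ ψ x (e i) * g i x ≤ ‖gradient φ x‖ ^ 2 := by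
    intro x
    have hv : ∀ i, fderiv ℝ φ x (e i) = (gradient φ x) i := by
      intro i
      have h1 : (inner ℝ (gradient φ x) (e i) : ℝ) = fderiv ℝ φ x (e i) :=
        InnerProductSpace.toDual_symm_apply
      have h2 : (inner ℝ (gradient φ x) (e i) : ℝ) = (gradient φ x) i := by
        rw [he]
        rw [EuclideanSpace.inner_single_right]
        simp
      rw [← h1, h2]
    have hnorm : ‖gradient φ x‖ ^ 2 = ∑ i, (fderiv ℝ φ x (e i)) ^ 2 := by
      rw [PiLp.norm_sq_eq_of_L2]
      congr 1
      funext i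
      rw [hv i]
      simp [sq_abs]
    rw [hnorm]
    apply Finset.sum_le_sum
    intro i _
    -- compute the derivative of ψ
    have h1 : HasFDerivAt (fun y => φ y * φ y)
        ((φ x) • fderiv ℝ φ x + (φ x) • fderiv ℝ φ x) x :=
      (hφd x).hasFDerivAt.mul (hφd x).hasFDerivAt
    have h2 : HasFDerivAt (fun y => (ζ y)⁻¹) ((-(ζ x ^ 2)⁻¹) • fderiv ℝ ζ x) x :=
      (hasDerivAt_inv (hζne x)).comp_hasFDerivAt x (hζd x).hasFDerivAt
    have hfun : ψ = fun y => (φ y * φ y) * (ζ y)⁻¹ := by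
      funext y
      show φ y ^ 2 / ζ y = φ y * φ y * (ζ y)⁻¹
      rw [pow_two, div_eq_mul_inv]
    have h3 : HasFDerivAt ψ
        ((φ x * φ x) • ((-(ζ x ^ 2)⁻¹) • fderiv ℝ ζ x) +
          (ζ x)⁻¹ • ((φ x) • fderiv ℝ φ x + (φ x) • fderiv ℝ φ x)) x := by
      rw [hfun]
      exact h1.mul h2
    have hexp : fderiv ℝ ψ x (e i) =
        (2 * φ x * fderiv ℝ φ x (e i) * ζ x - φ x ^ 2 * fderiv ℝ ζ x (e i)) / ζ x ^ 2 := by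
      rw [h3.fderiv]
      simp only [ContinuousLinearMap.add_apply, ContinuousLinearMap.coe_smul',
        Pi.smul_apply, smul_eq_mul]
      have hz := hζne x
      field_simp
      ring
    have hgx : g i x = fderiv ℝ ζ x (e i) := rfl
    rw [hexp, hgx, div_mul_eq_mul_div, div_le_iff₀ (pow_pos (hζpos x) 2)]
    nlinarith [sq_nonneg (fderiv ℝ φ x (e i) * ζ x - φ x * fderiv ℝ ζ x (e i)),
      sq_nonneg (ζ x), hζpos x]
  rw [step3]
  exact integral_mono (integrable_finset_sum _ (fun i _ => hint2 i)) hgradint hpt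
end

section
/- Let f : ℝⁿ → ℝ be C² with ∇f(p) ≠ 0, and suppose every row of the Hessian at p is parallel to ∇f(p) (i.e., ∇(∂_k f)(p) = κ_k·∇f(p) for scalars κ_k). Let γ : ℝ → ℝⁿ be a C² unit-speed curve lying in the level set {f = c} with γ(t̄) = p. Then γ''(t̄) = 0. -/
open InnerProductSpace

local notation "⟪" x ", " y "⟫" => @inner ℝ _ _ x y

private lemma inner_gradient_eq' {E : Type*} [NormedAddCommGroup E] [InnerProductSpace ℝ E]
    [CompleteSpace E] (f : E → ℝ) (x v : E) : ⟪gradient f x, v⟫ = fderiv ℝ f x v :=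
  InnerProductSpace.toDual_symm_apply

theorem level_set_geodesic
    (f : EuclideanSpace ℝ (Fin 2) → ℝ) (hf : ContDiff ℝ 2 f)
    (p : EuclideanSpace ℝ (Fin 2)) (hp : gradient f p ≠ 0)
    (hrows : ∀ k : Fin 2, ∃ κ : ℝ,
      gradient (fun x => gradient f x k) p = κ • gradient f p)
    (γ : ℝ → EuclideanSpace ℝ (Fin 2)) (hγ : ContDiff ℝ 2 γ)
    (hunit : ∀ t, ‖deriv γ t‖ = 1)
    (c : ℝ) (hlevel : ∀ t, f (γ t) = c)
    (tbar : ℝ) (hγp : γ tbar = p) :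
    deriv (deriv γ) tbar = 0 := by
  set v : EuclideanSpace ℝ (Fin 2) := deriv γ tbar with hv
  set a : EuclideanSpace ℝ (Fin 2) := deriv (deriv γ) tbar with ha
  set g : EuclideanSpace ℝ (Fin 2) := gradient f p with hg
  -- basic differentiability
  have hfd : Differentiable ℝ f := hf.differentiable (by norm_num)
  have hγd : Differentiable ℝ γ := hγ.differentiable (by norm_num)
  have hγ'c : ContDiff ℝ 1 (deriv γ) := by
    have := (contDiff_succ_iff_deriv (n := 1)).mp (by exact_mod_cast hγ)
    exact this.2.2
  have hγ'd : Differentiable ℝ (deriv γ) := hγ'c.differentiable (by norm_num)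
  -- Step 1 : ⟪a, v⟫ = 0
  have hav : ⟪a, v⟫ = 0 := by
    have h1 : HasDerivAt (fun t => ⟪deriv γ t, deriv γ t⟫) (⟪v, a⟫ + ⟪a, v⟫) tbar :=
      HasDerivAt.inner ℝ (hγ'd tbar).hasDerivAt (hγ'd tbar).hasDerivAt
    have h2 : (fun t => ⟪deriv γ t, deriv γ t⟫) = fun _ => (1:ℝ) := by
      funext t
      rw [real_inner_self_eq_norm_sq, hunit]; norm_num
    rw [h2] at h1
    have h3 : ⟪v, a⟫ + ⟪a, v⟫ = 0 := by
      have := h1.unique (hasDerivAt_const tbar (1:ℝ))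
      simpa using this
    have hc := real_inner_comm v a
    linarith
  -- Step 2 : ∀ t, ⟪gradient f (γ t), deriv γ t⟫ = 0
  have hperp : ∀ t, ⟪gradient f (γ t), deriv γ t⟫ = 0 := by
    intro t
    have h1 : HasDerivAt (fun s => f (γ s)) (fderiv ℝ f (γ t) (deriv γ t)) t :=
      (hfd (γ t)).hasFDerivAt.comp_hasDerivAt t (hγd t).hasDerivAt
    have h2 : (fun s => f (γ s)) = fun _ => c := funext hlevel
    rw [h2] at h1
    have h3 := h1.unique (hasDerivAt_const t c)
    rw [inner_gradient_eq', h3]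
  have hgv : ⟪g, v⟫ = 0 := by
    have := hperp tbar; rwa [hγp] at this
  -- Step 3 : the gradient map is C¹ and its derivative along γ at tbar vanishes
  have hGc : ContDiff ℝ 1 (fun x => gradient f x) := by
    have h1 : ContDiff ℝ 1 (fderiv ℝ f) := hf.fderiv_right (by norm_num)
    exact ((toDual ℝ (EuclideanSpace ℝ (Fin 2))).symm.contDiff).comp h1
  have hGd : Differentiable ℝ (fun x : EuclideanSpace ℝ (Fin 2) => gradient f x) := hGc.differentiable (by norm_num)
  set D : EuclideanSpace ℝ (Fin 2) := fderiv ℝ (fun x => gradient f x) p v with hD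
  have hDzero : D = 0 := by
    ext k
    show D k = (0 : ℝ)
    have h1 : HasFDerivAt (fun x : EuclideanSpace ℝ (Fin 2) => gradient f x k)
        ((EuclideanSpace.proj k).comp (fderiv ℝ (fun x => gradient f x) p)) p := by
      simpa [Function.comp_def] using
        (EuclideanSpace.proj k).hasFDerivAt.comp p (hGd p).hasFDerivAt
    have h2 : fderiv ℝ (fun x : EuclideanSpace ℝ (Fin 2) => gradient f x k) p v = D k := by
      rw [h1.fderiv]; rfl
    obtain ⟨κ, hκ⟩ := hrows k
    have h3 : ⟪gradient (fun x => gradient f x k) p, v⟫ = D k := by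
      rw [inner_gradient_eq', h2]
    rw [hκ, real_inner_smul_left, hgv, mul_zero] at h3
    exact h3.symm
  -- Step 4 : ⟪g, a⟫ = 0
  have hga : ⟪g, a⟫ = 0 := by
    have hG : HasDerivAt (fun t => gradient f (γ t)) D tbar := by
      have hfd' : HasFDerivAt (fun x => gradient f x)
          (fderiv ℝ (fun x => gradient f x) p) (γ tbar) := hγp ▸ (hGd p).hasFDerivAt
      exact hfd'.comp_hasDerivAt tbar (hγd tbar).hasDerivAt
    have h1 : HasDerivAt (fun t => ⟪gradient f (γ t), deriv γ t⟫)
        (⟪gradient f (γ tbar), a⟫ + ⟪D, v⟫) tbar :=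
      HasDerivAt.inner ℝ hG (hγ'd tbar).hasDerivAt
    have h2 : (fun t => ⟪gradient f (γ t), deriv γ t⟫) = fun _ => (0:ℝ) := funext hperp
    rw [h2] at h1
    have h3 := h1.unique (hasDerivAt_const tbar (0:ℝ))
    rw [hDzero, inner_zero_left, add_zero, hγp] at h3
    exact h3
  -- Step 5 : linear algebra in dimension 2
  have hvne : v ≠ 0 := by
    intro h; have := hunit tbar; rw [← hv, h, norm_zero] at this; norm_num at this
  -- a is orthogonal to the spanning set {v, g}
  have hv2 : ⟪v, v⟫ ≠ 0 := inner_self_ne_zero.mpr hvne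
  have hg2 : ⟪g, g⟫ ≠ 0 := inner_self_ne_zero.mpr hp
  have hvg : ⟪v, g⟫ = 0 := by rw [real_inner_comm]; exact hgv
  have hspan : Submodule.span ℝ {v, g} = ⊤ := by
    have hli : LinearIndependent ℝ ![v, g] := by
      rw [LinearIndependent.pair_iff]
      intro s t hst
      have h1 : s * ⟪v, v⟫ = 0 := by
        have h := congrArg (fun w => ⟪v, w⟫) hst
        simp only [inner_add_right, real_inner_smul_right, hvg,
          mul_zero, add_zero, inner_zero_right] at h
        exact h
      have h2 : t * ⟪g, g⟫ = 0 := by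
        have h := congrArg (fun w => ⟪g, w⟫) hst
        simp only [inner_add_right, real_inner_smul_right, hgv,
          mul_zero, zero_add, inner_zero_right] at h
        exact h
      exact ⟨(mul_eq_zero.mp h1).resolve_right hv2, (mul_eq_zero.mp h2).resolve_right hg2⟩
    have h2 : Submodule.span ℝ (Set.range ![v, g]) = ⊤ := by
      apply Submodule.eq_top_of_finrank_eq
      rw [finrank_span_eq_card hli]
      simp [finrank_euclideanSpace]
    rwa [show Set.range ![v, g] = {v, g} by simp [Matrix.range_cons, Matrix.range_empty]; exact Set.pair_comm g v] at h2
  obtain ⟨s, t, hst⟩ := Submodule.mem_span_pair.mp (hspan ▸ Submodule.mem_top (x := a))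
  have hva : ⟪v, a⟫ = 0 := by rw [real_inner_comm]; exact hav
  have h1 : ⟪v, a⟫ = s * ⟪v, v⟫ := by
    rw [← hst]
    simp only [inner_add_right, real_inner_smul_right, hvg, mul_zero, add_zero]
  have h2 : ⟪g, a⟫ = t * ⟪g, g⟫ := by
    rw [← hst]
    simp only [inner_add_right, real_inner_smul_right, hgv, mul_zero, zero_add]
  have hs : s = 0 := by rw [hva] at h1; exact (mul_eq_zero.mp h1.symm).resolve_right hv2
  have ht : t = 0 := by rw [hga] at h2; exact (mul_eq_zero.mp h2.symm).resolve_right hg2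
  rw [← hst, hs, ht, zero_smul, zero_smul, add_zero]
end

section
/- Weighted Poincaré inequality for a single equation in ℝⁿ: let u ∈ C³(ℝⁿ) solve −Δu = H(u) with H ∈ C¹(ℝ), and suppose u is stable in the sense that ∫ H'(u)φ² ≤ ∫ ‖∇φ‖² for all φ ∈ C_c¹(ℝⁿ). Then for every η ∈ C_c¹(ℝⁿ): ∫ (‖Hess u‖² − ‖∇‖∇u‖‖²)·η² ≤ ∫ ‖∇u‖²·‖∇η‖². -/
open MeasureTheory

noncomputable def hessFrobSq {n : ℕ} (f : EuclideanSpace ℝ (Fin n) → ℝ)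
    (p : EuclideanSpace ℝ (Fin n)) : ℝ :=
  ∑ k : Fin n, ‖gradient (fun x => gradient f x k) p‖ ^ 2


variable {n : ℕ}

local notation "E" => EuclideanSpace ℝ (Fin n)

noncomputable def pd (i : Fin n) (f : E → ℝ) (x : E) : ℝ :=
  fderiv ℝ f x (EuclideanSpace.single i 1)

lemma grad_apply (f : E → ℝ) (x : E) (i : Fin n) :
    gradient f x i = pd i f x := by
  have h : inner ℝ ((InnerProductSpace.toDual ℝ (EuclideanSpace ℝ (Fin n))).symm
      (fderiv ℝ f x)) (EuclideanSpace.single i (1:ℝ))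
      = fderiv ℝ f x (EuclideanSpace.single i (1:ℝ)) :=
    InnerProductSpace.toDual_symm_apply
  rw [gradient, pd, ← h, real_inner_comm, EuclideanSpace.inner_single_left]
  simp

lemma norm_grad_sq (f : E → ℝ) (x : E) :
    ‖gradient f x‖ ^ 2 = ∑ i, (pd i f x) ^ 2 := by
  rw [EuclideanSpace.norm_eq, Real.sq_sqrt (by positivity)]
  refine Finset.sum_congr rfl fun i _ => ?_
  rw [grad_apply]; simp [sq_abs]

lemma haar_test : (volume : Measure E).IsAddHaarMeasure := by infer_instance

lemma contDiff_pd {m : ℕ} {f : E → ℝ} (hf : ContDiff ℝ (m + 1) f) (i : Fin n) :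
    ContDiff ℝ m (pd i f) := by
  have h1 : ContDiff ℝ m (fderiv ℝ f) := hf.fderiv_right (by norm_cast)
  exact (ContinuousLinearMap.apply ℝ ℝ (EuclideanSpace.single i (1:ℝ))).contDiff.comp h1

lemma continuous_pd {f : E → ℝ} (hf : ContDiff ℝ 1 f) (i : Fin n) :
    Continuous (pd i f) :=
  ((ContinuousLinearMap.apply ℝ ℝ (EuclideanSpace.single i (1:ℝ))).continuous).comp
    (hf.continuous_fderiv one_ne_zero)


lemma pd_pd_eq {f : E → ℝ} {x : E} (hf : DifferentiableAt ℝ (fderiv ℝ f) x) (i j : Fin n) :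
    pd i (pd j f) x = fderiv ℝ (fderiv ℝ f) x
      (EuclideanSpace.single i 1) (EuclideanSpace.single j 1) := by
  unfold pd
  rw [fderiv_clm_apply hf (differentiableAt_const _)]
  simp

lemma pd_symm {f : E → ℝ} (hf : ContDiff ℝ 2 f) (i j : Fin n) (x : E) :
    pd i (pd j f) x = pd j (pd i f) x := by
  have hd : DifferentiableAt ℝ (fderiv ℝ f) x :=
    ((hf.fderiv_right (m := 1) (by norm_num)).differentiable one_ne_zero) x
  have hsymm : IsSymmSndFDerivAt ℝ f x :=
    hf.contDiffAt.isSymmSndFDerivAt (by norm_num)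
  rw [pd_pd_eq hd, pd_pd_eq hd, hsymm]

lemma lap_eq (f : E → ℝ) (x : E) : lap f x = ∑ j, pd j (pd j f) x := rfl

lemma pd_sum {A : Fin n → E → ℝ} {x : E}
    (h : ∀ j, DifferentiableAt ℝ (A j) x) (i : Fin n) :
    pd i (fun y => ∑ j, A j y) x = ∑ j, pd i (A j) x := by
  unfold pd
  rw [fderiv_fun_sum (fun j _ => h j)]
  simp [ContinuousLinearMap.sum_apply]

lemma lap_pd {u : E → ℝ} (hu : ContDiff ℝ 3 u) (i : Fin n) (x : E) :
    lap (pd i u) x = pd i (lap u) x := by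
  have hu2 : ContDiff ℝ 2 u := hu.of_le (by norm_num)
  have hpdj : ∀ j : Fin n, ContDiff ℝ 2 (pd j u) := fun j =>
    contDiff_pd (m := 2) (by exact_mod_cast hu) j
  have h1 : ∀ j : Fin n, pd j (pd i u) = pd i (pd j u) := fun j =>
    funext fun y => pd_symm hu2 j i y
  have h2 : ∀ j : Fin n, ∀ y : E, pd j (pd i (pd j u)) y = pd i (pd j (pd j u)) y :=
    fun j y => pd_symm (hpdj j) j i y
  have h3 : ∀ j : Fin n, DifferentiableAt ℝ (pd j (pd j u)) x := fun j =>
    ((contDiff_pd (m := 1) (hpdj j) j).differentiable (by norm_num)) x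
  calc lap (pd i u) x = ∑ j, pd j (pd j (pd i u)) x := lap_eq _ _
    _ = ∑ j, pd i (pd j (pd j u)) x := by
        refine Finset.sum_congr rfl fun j _ => ?_
        rw [h1 j, h2 j x]
    _ = pd i (fun y => ∑ j, pd j (pd j u) y) x := (pd_sum h3 i).symm
    _ = pd i (lap u) x := rfl

lemma pd_comp_H {u : E → ℝ} {H : ℝ → ℝ} (hu : ContDiff ℝ 3 u) (hH : ContDiff ℝ 1 H)
    (i : Fin n) (x : E) :
    pd i (fun y => H (u y)) x = deriv H (u x) * pd i u x := by
  have h1 : HasDerivAt H (deriv H (u x)) (u x) :=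
    ((hH.differentiable one_ne_zero) (u x)).hasDerivAt
  have h2 : HasFDerivAt u (fderiv ℝ u x) x :=
    ((hu.differentiable (by norm_num)) x).hasFDerivAt
  have h3 : HasFDerivAt (fun y => H (u y)) (deriv H (u x) • fderiv ℝ u x) x :=
    h1.comp_hasFDerivAt x h2
  rw [pd, h3.fderiv]
  simp [pd, mul_comm]

lemma lap_pd_eq {u : E → ℝ} {H : ℝ → ℝ} (hu : ContDiff ℝ 3 u) (hH : ContDiff ℝ 1 H)
    (heq : ∀ x, -lap u x = H (u x)) (i : Fin n) (x : E) :
    lap (pd i u) x = -(deriv H (u x) * pd i u x) := by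
  have h0 : (fun y => lap u y) = (fun y => -(H (u y))) := by
    funext y; rw [← heq y]; ring
  rw [lap_pd hu i x]
  have : pd i (lap u) x = pd i (fun y => -(H (u y))) x := by
    unfold pd; rw [show (lap (n := n) u) = (fun y => -(H (u y))) from h0]
  rw [this, show (fun y => -(H (u y))) = (fun y => (-1 : ℝ) * H (u y)) by funext y; ring]
  have hd : DifferentiableAt ℝ (fun y => H (u y)) x :=
    ((hH.differentiable one_ne_zero).comp (hu.differentiable (by norm_num))) x
  rw [pd, fderiv_const_mul hd]
  simp only [ContinuousLinearMap.coe_smul', Pi.smul_apply, smul_eq_mul]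
  rw [show (fderiv ℝ (fun y => H (u y)) x) (EuclideanSpace.single i 1) = pd i (fun y => H (u y)) x from rfl,
    pd_comp_H hu hH i x]
  ring

lemma hcs_of {f g : E → ℝ} (hgc : HasCompactSupport g)
    (h : ∀ x, x ∉ tsupport g → f x = 0) : HasCompactSupport f := by
  apply HasCompactSupport.of_support_subset_isCompact hgc
  intro x hx
  by_contra hxn
  exact hx (h x hxn)

lemma integrable_of {f g : E → ℝ} (hf : Continuous f) (hgc : HasCompactSupport g)
    (h : ∀ x, x ∉ tsupport g → f x = 0) : Integrable f :=
  (hf.integrable_of_hasCompactSupport (hcs_of hgc h))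

lemma pd_zero_of_nmem {f : E → ℝ} {x : E} (hx : x ∉ tsupport f) (j : Fin n) :
    pd j f x = 0 := by
  have : fderiv ℝ f x = 0 := by
    by_contra hne
    exact hx (support_fderiv_subset ℝ (Function.mem_support.2 hne))
  simp [pd, this]

lemma ibp {f g : E → ℝ} (hf : ContDiff ℝ 1 f) (hg : ContDiff ℝ 1 g)
    (hfc : HasCompactSupport f) (j : Fin n) :
    ∫ x : E, f x * pd j g x = -∫ x : E, pd j f x * g x := by
  have h1 : Integrable (fun x : E => pd j f x * g x) := by
    refine integrable_of ((continuous_pd hf j).mul (hg.continuous)) hfc fun x hx => ?_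
    rw [pd_zero_of_nmem hx j, zero_mul]
  have h2 : Integrable (fun x : E => f x * pd j g x) := by
    refine integrable_of ((hf.continuous).mul (continuous_pd hg j)) hfc fun x hx => ?_
    rw [image_eq_zero_of_notMem_tsupport hx, zero_mul]
  have h3 : Integrable (fun x : E => f x * g x) := by
    refine integrable_of ((hf.continuous).mul (hg.continuous)) hfc fun x hx => ?_
    rw [image_eq_zero_of_notMem_tsupport hx, zero_mul]
  exact integral_mul_fderiv_eq_neg_fderiv_mul_of_integrable h1 h2 h3
    (fun x _ => hf.differentiable one_ne_zero x) (fun x _ => hg.differentiable one_ne_zero x)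

lemma pd_mul {f g : E → ℝ} {x : E} (hf : DifferentiableAt ℝ f x)
    (hg : DifferentiableAt ℝ g x) (j : Fin n) :
    pd j (fun y => f y * g y) x = pd j f x * g x + f x * pd j g x := by
  unfold pd; rw [fderiv_fun_mul hf hg]; simp; ring

noncomputable def Wf (u : E → ℝ) (x : E) : ℝ := ∑ i, pd i u x ^ 2

noncomputable def Sf (u : E → ℝ) (x : E) : ℝ :=
  ∑ k : Fin n, ∑ i : Fin n, pd i (pd k u) x ^ 2

lemma Wf_nonneg (u : E → ℝ) (x : E) : 0 ≤ Wf u x := by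
  apply Finset.sum_nonneg; intro i _; positivity

lemma Sf_nonneg (u : E → ℝ) (x : E) : 0 ≤ Sf u x := by
  apply Finset.sum_nonneg; intro i _; apply Finset.sum_nonneg; intro j _; positivity

lemma Wf_eq {u : E → ℝ} (x : E) : ‖gradient u x‖ ^ 2 = Wf u x := norm_grad_sq u x

lemma Sf_eq {u : E → ℝ} (x : E) : hessFrobSq u x = Sf u x := by
  unfold hessFrobSq Sf
  refine Finset.sum_congr rfl fun k _ => ?_
  have : (fun x => gradient u x k) = pd k u := by
    funext y; exact grad_apply u y k
  rw [this, norm_grad_sq]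

lemma Wf_contDiff {u : E → ℝ} (hu : ContDiff ℝ 3 u) : ContDiff ℝ 2 (Wf u) := by
  unfold Wf
  refine ContDiff.sum fun i _ => ?_
  have h := contDiff_pd (m := 2) (by exact_mod_cast hu) i
  exact h.pow 2

lemma contDiff_pd_pd {u : E → ℝ} (hu : ContDiff ℝ 3 u) (k i : Fin n) :
    ContDiff ℝ 1 (pd i (pd k u)) :=
  contDiff_pd (m := 1) (contDiff_pd (m := 2) (by exact_mod_cast hu) k) i

lemma Sf_continuous {u : E → ℝ} (hu : ContDiff ℝ 3 u) : Continuous (Sf u) := by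
  unfold Sf
  refine continuous_finset_sum _ fun k _ => continuous_finset_sum _ fun i _ => ?_
  exact ((contDiff_pd_pd hu k i).continuous).pow 2

lemma pd_Wf {u : E → ℝ} (hu : ContDiff ℝ 3 u) (j : Fin n) (x : E) :
    pd j (Wf u) x = ∑ i, 2 * pd i u x * pd j (pd i u) x := by
  have hdiff : ∀ i : Fin n, DifferentiableAt ℝ (fun y => pd i u y ^ 2) x := by
    intro i
    have h := (contDiff_pd (m := 2) (by exact_mod_cast hu) i).differentiable (by norm_num)
    exact (h x).pow 2
  have : pd j (Wf u) x = ∑ i, pd j (fun y => pd i u y ^ 2) x := pd_sum hdiff j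
  rw [this]
  refine Finset.sum_congr rfl fun i _ => ?_
  have h := (contDiff_pd (m := 2) (by exact_mod_cast hu) i).differentiable (by norm_num)
  have h2 : pd j (fun y => pd i u y * pd i u y) x
      = pd j (pd i u) x * pd i u x + pd i u x * pd j (pd i u) x := pd_mul (h x) (h x) j
  have h3 : (fun y => pd i u y ^ 2) = (fun y => pd i u y * pd i u y) := by
    funext y; ring
  rw [h3, h2]; ring

lemma pd_Wf_zero {u : E → ℝ} (hu : ContDiff ℝ 3 u) {x : E} (hx : Wf u x = 0) (j : Fin n) :
    pd j (Wf u) x = 0 := by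
  have hmin : IsLocalMin (Wf u) x := by
    filter_upwards with y
    rw [hx]; exact Wf_nonneg u y
  rw [pd, hmin.fderiv_eq_zero]; simp

lemma pd_Wf_sq_le {u : E → ℝ} (hu : ContDiff ℝ 3 u) (j : Fin n) (x : E) :
    pd j (Wf u) x ^ 2 ≤ 4 * Wf u x * ∑ i, pd j (pd i u) x ^ 2 := by
  rw [pd_Wf hu j x]
  have := Finset.sum_mul_sq_le_sq_mul_sq Finset.univ
    (fun i : Fin n => 2 * pd i u x) (fun i : Fin n => pd j (pd i u) x)
  calc (∑ i, 2 * pd i u x * pd j (pd i u) x) ^ 2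
      ≤ (∑ i, (2 * pd i u x) ^ 2) * ∑ i, pd j (pd i u) x ^ 2 := this
    _ = 4 * Wf u x * ∑ i, pd j (pd i u) x ^ 2 := by
        unfold Wf
        congr 1
        rw [Finset.mul_sum]
        refine Finset.sum_congr rfl fun i _ => ?_; ring

noncomputable def NM (u : E → ℝ) (x : E) : ℝ := Real.sqrt (Wf u x)

lemma NM_eq {u : E → ℝ} : (fun y => ‖gradient u y‖) = NM u := by
  funext y
  rw [NM, ← Wf_eq, Real.sqrt_sq (norm_nonneg _)]

lemma grad_NM_zero {u : E → ℝ} {x : E} (hx : Wf u x = 0) :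
    gradient (NM u) x = 0 := by
  by_cases hd : DifferentiableAt ℝ (NM u) x
  · have hmin : IsLocalMin (NM u) x := by
      filter_upwards with y
      rw [NM, NM, hx, Real.sqrt_zero]; exact Real.sqrt_nonneg _
    rw [gradient, hmin.fderiv_eq_zero]; simp
  · rw [gradient, fderiv_zero_of_not_differentiableAt hd]; simp

lemma hasFDerivAt_NM {u : E → ℝ} (hu : ContDiff ℝ 3 u) {x : E} (hx : 0 < Wf u x) :
    HasFDerivAt (NM u) ((1 / (2 * Real.sqrt (Wf u x))) • fderiv ℝ (Wf u) x) x := by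
  have hW : HasFDerivAt (Wf u) (fderiv ℝ (Wf u) x) x :=
    (((Wf_contDiff hu).differentiable (by norm_num)) x).hasFDerivAt
  exact hW.sqrt (ne_of_gt hx)

lemma grad_NM_sq {u : E → ℝ} (hu : ContDiff ℝ 3 u) {x : E} (hx : 0 < Wf u x) :
    ‖gradient (NM u) x‖ ^ 2 = (∑ j, pd j (Wf u) x ^ 2) / (4 * Wf u x) := by
  rw [norm_grad_sq]
  have hF := hasFDerivAt_NM hu hx
  have hpd : ∀ j : Fin n, pd j (NM u) x
      = (1 / (2 * Real.sqrt (Wf u x))) * pd j (Wf u) x := by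
    intro j
    rw [pd, hF.fderiv]; simp [pd]
  have hsq : Real.sqrt (Wf u x) ^ 2 = Wf u x := Real.sq_sqrt (le_of_lt hx)
  rw [Finset.sum_congr rfl fun j _ => by rw [hpd j]]
  rw [Finset.sum_div]
  refine Finset.sum_congr rfl fun j _ => ?_
  have h4 : (2 * Real.sqrt (Wf u x)) ^ 2 = 4 * Wf u x := by
    rw [mul_pow, hsq]; norm_num
  rw [mul_pow, div_pow, one_pow, h4, one_div, inv_mul_eq_div]

section Main

variable {u : EuclideanSpace ℝ (Fin n) → ℝ} {η : EuclideanSpace ℝ (Fin n) → ℝ}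

lemma tsupp_mul_eta {f : EuclideanSpace ℝ (Fin n) → ℝ} :
    tsupport (fun y => f y * η y ^ 2) ⊆ tsupport η := by
  refine closure_minimal ?_ (isClosed_tsupport η)
  intro x hx
  by_contra hxn
  have h0 : (fun y => f y * η y ^ 2) x = 0 := by
    simp [image_eq_zero_of_notMem_tsupport hxn]
  exact Function.mem_support.1 hx h0

lemma stepD {H : ℝ → ℝ} (hu : ContDiff ℝ 3 u) (hH : ContDiff ℝ 1 H)
    (heq : ∀ x, -lap u x = H (u x))
    (hη : ContDiff ℝ 1 η) (hηc : HasCompactSupport η) :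
    (∫ x : E, deriv H (u x) * Wf u x * η x ^ 2)
      = (∫ x : E, Sf u x * η x ^ 2) + ∫ x : E, η x * ∑ j, pd j (Wf u) x * pd j η x := by
  have huv : ∀ i : Fin n, ContDiff ℝ 2 (pd i u) := fun i =>
    contDiff_pd (m := 2) (by exact_mod_cast hu) i
  have huv1 : ∀ i : Fin n, ContDiff ℝ 1 (pd i u) := fun i => (huv i).of_le (by norm_num)
  have hfC1 : ∀ i : Fin n, ContDiff ℝ 1 (fun y => pd i u y * η y ^ 2) := fun i =>
    (huv1 i).mul (hη.pow 2)
  have hfc : ∀ i : Fin n, HasCompactSupport (fun y => pd i u y * η y ^ 2) := by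
    intro i
    refine hcs_of (f := fun y => pd i u y * η y ^ 2) hηc fun x hx => ?_
    simp [image_eq_zero_of_notMem_tsupport hx]
  have hppC1 : ∀ i j : Fin n, ContDiff ℝ 1 (pd j (pd i u)) := fun i j =>
    contDiff_pd (m := 1) (huv i) j
  -- integration by parts
  have d1 : ∀ i j : Fin n,
      ∫ x : E, pd j (fun y => pd i u y * η y ^ 2) x * pd j (pd i u) x
        = - ∫ x : E, (fun y => pd i u y * η y ^ 2) x * pd j (pd j (pd i u)) x := by
    intro i j
    have h := ibp (hfC1 i) (hppC1 i j) (hfc i) j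
    linarith [h]
  -- each summand integrable
  have intt : ∀ i j : Fin n, Integrable
      (fun x : E => pd j (fun y => pd i u y * η y ^ 2) x * pd j (pd i u) x) := by
    intro i j
    refine integrable_of ((continuous_pd (hfC1 i) j).mul (hppC1 i j).continuous) hηc
      fun x hx => ?_
    have : x ∉ tsupport (fun y => pd i u y * η y ^ 2) := fun hmem => hx (tsupp_mul_eta hmem)
    rw [pd_zero_of_nmem this j, zero_mul]
  have intlap : ∀ i j : Fin n, Integrable
      (fun x : E => (fun y => pd i u y * η y ^ 2) x * pd j (pd j (pd i u)) x) := by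
    intro i j
    refine integrable_of (((huv1 i).continuous.mul (hη.continuous.pow 2)).mul
      (continuous_pd (hppC1 i j) j)) hηc fun x hx => ?_
    simp [image_eq_zero_of_notMem_tsupport hx]
  -- d2
  have d2 : ∀ i : Fin n, (∫ x : E, deriv H (u x) * pd i u x ^ 2 * η x ^ 2)
      = ∑ j, ∫ x : E, pd j (fun y => pd i u y * η y ^ 2) x * pd j (pd i u) x := by
    intro i
    have hpt : ∀ x : E, deriv H (u x) * pd i u x ^ 2 * η x ^ 2
        = ∑ j, -((fun y => pd i u y * η y ^ 2) x * pd j (pd j (pd i u)) x) := by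
      intro x
      have hlap := lap_pd_eq hu hH heq i x
      rw [lap_eq] at hlap
      have : ∑ j, (fun y => pd i u y * η y ^ 2) x * pd j (pd j (pd i u)) x
          = (pd i u x * η x ^ 2) * ∑ j, pd j (pd j (pd i u)) x := by
        rw [Finset.mul_sum]
      rw [Finset.sum_neg_distrib, this, hlap]
      ring
    calc (∫ x : E, deriv H (u x) * pd i u x ^ 2 * η x ^ 2)
        = ∫ x : E, ∑ j, -((fun y => pd i u y * η y ^ 2) x * pd j (pd j (pd i u)) x) := by
          exact integral_congr_ae (Filter.Eventually.of_forall hpt)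
      _ = ∑ j, ∫ x : E, -((fun y => pd i u y * η y ^ 2) x * pd j (pd j (pd i u)) x) :=
          integral_finset_sum _ fun j _ => (intlap i j).neg
      _ = ∑ j, ∫ x : E, pd j (fun y => pd i u y * η y ^ 2) x * pd j (pd i u) x := by
          refine Finset.sum_congr rfl fun j _ => ?_
          rw [integral_neg, ← d1 i j]
  -- pointwise expansion of the integrand
  have hd3 : ∀ x : E, (∑ i, ∑ j, pd j (fun y => pd i u y * η y ^ 2) x * pd j (pd i u) x)
      = Sf u x * η x ^ 2 + η x * ∑ j, pd j (Wf u) x * pd j η x := by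
    intro x
    have hexp : ∀ i j : Fin n, pd j (fun y => pd i u y * η y ^ 2) x
        = pd j (pd i u) x * η x ^ 2 + pd i u x * (2 * η x * pd j η x) := by
      intro i j
      have hηd : DifferentiableAt ℝ (fun y => η y ^ 2) x := ((hη.differentiable one_ne_zero) x).pow 2
      have h1 := pd_mul (((huv1 i).differentiable one_ne_zero) x) hηd j
      have h2 : pd j (fun y => η y ^ 2) x = 2 * η x * pd j η x := by
        have h3 : (fun y => η y ^ 2) = (fun y => η y * η y) := by funext y; ring
        rw [h3, pd_mul ((hη.differentiable one_ne_zero) x) ((hη.differentiable one_ne_zero) x) j]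
        ring
      rw [h1, h2]
    calc (∑ i, ∑ j, pd j (fun y => pd i u y * η y ^ 2) x * pd j (pd i u) x)
        = ∑ i, ∑ j, (pd j (pd i u) x ^ 2 * η x ^ 2
            + pd i u x * (2 * η x * pd j η x) * pd j (pd i u) x) := by
          refine Finset.sum_congr rfl fun i _ => Finset.sum_congr rfl fun j _ => ?_
          rw [hexp i j]; ring
      _ = (∑ i, ∑ j, pd j (pd i u) x ^ 2 * η x ^ 2)
            + ∑ i, ∑ j, pd i u x * (2 * η x * pd j η x) * pd j (pd i u) x := by
          rw [← Finset.sum_add_distrib]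
          refine Finset.sum_congr rfl fun i _ => ?_
          rw [← Finset.sum_add_distrib]
      _ = Sf u x * η x ^ 2 + η x * ∑ j, pd j (Wf u) x * pd j η x := by
          congr 1
          · unfold Sf
            rw [Finset.sum_mul]
            refine Finset.sum_congr rfl fun i _ => ?_
            rw [Finset.sum_mul]
          · rw [Finset.sum_comm, Finset.mul_sum]
            refine Finset.sum_congr rfl fun j _ => ?_
            rw [pd_Wf hu j x, Finset.sum_mul, Finset.mul_sum]
            refine Finset.sum_congr rfl fun i _ => ?_
            ring
  -- integrability of the two RHS pieces
  have intS : Integrable (fun x : E => Sf u x * η x ^ 2) := by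
    refine integrable_of ((Sf_continuous hu).mul (hη.continuous.pow 2)) hηc fun x hx => ?_
    simp [image_eq_zero_of_notMem_tsupport hx]
  have intC : Integrable (fun x : E => η x * ∑ j, pd j (Wf u) x * pd j η x) := by
    have hc : Continuous fun x : E => η x * ∑ j, pd j (Wf u) x * pd j η x := by
      refine hη.continuous.mul (continuous_finset_sum _ fun j _ => ?_)
      exact (continuous_pd ((Wf_contDiff hu).of_le (by norm_num)) j).mul (continuous_pd hη j)
    refine integrable_of hc hηc fun x hx => ?_
    simp [image_eq_zero_of_notMem_tsupport hx]
  have hptW : ∀ x : E, deriv H (u x) * Wf u x * η x ^ 2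
      = ∑ i, deriv H (u x) * pd i u x ^ 2 * η x ^ 2 := by
    intro x; unfold Wf
    rw [Finset.mul_sum, Finset.sum_mul]
  have intHi : ∀ i : Fin n, Integrable
      (fun x : E => deriv H (u x) * pd i u x ^ 2 * η x ^ 2) := by
    intro i
    have hc : Continuous fun x : E => deriv H (u x) * pd i u x ^ 2 * η x ^ 2 :=
      (((hH.continuous_deriv le_rfl).comp hu.continuous).mul
        ((huv1 i).continuous.pow 2)).mul (hη.continuous.pow 2)
    refine integrable_of hc hηc fun x hx => ?_
    simp [image_eq_zero_of_notMem_tsupport hx]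
  calc (∫ x : E, deriv H (u x) * Wf u x * η x ^ 2)
      = ∫ x : E, ∑ i, deriv H (u x) * pd i u x ^ 2 * η x ^ 2 :=
        integral_congr_ae (Filter.Eventually.of_forall hptW)
    _ = ∑ i, ∫ x : E, deriv H (u x) * pd i u x ^ 2 * η x ^ 2 :=
        integral_finset_sum _ fun i _ => intHi i
    _ = ∑ i, ∑ j, ∫ x : E, pd j (fun y => pd i u y * η y ^ 2) x * pd j (pd i u) x :=
        Finset.sum_congr rfl fun i _ => d2 i
    _ = ∑ i, ∫ x : E, ∑ j, pd j (fun y => pd i u y * η y ^ 2) x * pd j (pd i u) x :=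
        Finset.sum_congr rfl fun i _ => (integral_finset_sum _ fun j _ => intt i j).symm
    _ = ∫ x : E, ∑ i, ∑ j, pd j (fun y => pd i u y * η y ^ 2) x * pd j (pd i u) x :=
        (integral_finset_sum _ fun i _ => integrable_finset_sum _ fun j _ => intt i j).symm
    _ = ∫ x : E, (Sf u x * η x ^ 2 + η x * ∑ j, pd j (Wf u) x * pd j η x) :=
        integral_congr_ae (Filter.Eventually.of_forall hd3)
    _ = (∫ x : E, Sf u x * η x ^ 2) + ∫ x : E, η x * ∑ j, pd j (Wf u) x * pd j η x :=
        integral_add intS intC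

noncomputable def gk (u : EuclideanSpace ℝ (Fin n) → ℝ) (k : ℕ)
    (x : EuclideanSpace ℝ (Fin n)) : ℝ :=
  Real.sqrt (Wf u x + (((k : ℝ) + 1)⁻¹) ^ 2)

noncomputable def Pk (u η : EuclideanSpace ℝ (Fin n) → ℝ) (k : ℕ)
    (x : EuclideanSpace ℝ (Fin n)) : ℝ :=
  η x ^ 2 * (∑ j, pd j (Wf u) x ^ 2) / (4 * (Wf u x + (((k : ℝ) + 1)⁻¹) ^ 2))

lemma gk_pos (u : EuclideanSpace ℝ (Fin n) → ℝ) (k : ℕ) (x : EuclideanSpace ℝ (Fin n)) :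
    0 < gk u k x := by
  have h : (0:ℝ) < Wf u x + (((k : ℝ) + 1)⁻¹) ^ 2 := by
    have := Wf_nonneg u x; positivity
  exact Real.sqrt_pos.2 h

lemma gk_sq (u : EuclideanSpace ℝ (Fin n) → ℝ) (k : ℕ) (x : EuclideanSpace ℝ (Fin n)) :
    gk u k x ^ 2 = Wf u x + (((k : ℝ) + 1)⁻¹) ^ 2 := by
  have := Wf_nonneg u x
  exact Real.sq_sqrt (by positivity)

lemma gk_contDiff (hu : ContDiff ℝ 3 u) (k : ℕ) : ContDiff ℝ 1 (gk u k) := by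
  rw [contDiff_iff_contDiffAt]
  intro x
  have hpos : (0:ℝ) < Wf u x + (((k : ℝ) + 1)⁻¹) ^ 2 := by
    have := Wf_nonneg u x; positivity
  have h1 : ContDiffAt ℝ 1 (fun y => Wf u y + (((k : ℝ) + 1)⁻¹) ^ 2) x :=
    (((Wf_contDiff hu).of_le (by norm_num)).contDiffAt).add contDiffAt_const
  exact (Real.contDiffAt_sqrt (ne_of_gt hpos)).comp x h1

lemma gk_hasFDerivAt (hu : ContDiff ℝ 3 u) (k : ℕ) (x : EuclideanSpace ℝ (Fin n)) :
    HasFDerivAt (gk u k) ((1 / (2 * gk u k x)) • fderiv ℝ (Wf u) x) x := by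
  have hpos : (0:ℝ) < Wf u x + (((k : ℝ) + 1)⁻¹) ^ 2 := by
    have := Wf_nonneg u x; positivity
  have hWd : HasFDerivAt (Wf u) (fderiv ℝ (Wf u) x) x :=
    ((((Wf_contDiff hu).of_le (by norm_num)).differentiable one_ne_zero) x).hasFDerivAt
  have h1 : HasFDerivAt (fun y => Wf u y + (((k : ℝ) + 1)⁻¹) ^ 2) (fderiv ℝ (Wf u) x) x :=
    hWd.add_const _
  exact h1.sqrt (ne_of_gt hpos)

lemma pd_gk (hu : ContDiff ℝ 3 u) (k : ℕ) (x : EuclideanSpace ℝ (Fin n)) (j : Fin n) :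
    pd j (gk u k) x = (1 / (2 * gk u k x)) * pd j (Wf u) x := by
  rw [pd, (gk_hasFDerivAt hu k x).fderiv]
  simp [pd]

lemma eps_sq_tendsto :
    Filter.Tendsto (fun k : ℕ => (((k : ℝ) + 1)⁻¹) ^ 2) Filter.atTop (nhds 0) := by
  have h1 : Filter.Tendsto (fun k : ℕ => ((k : ℝ) + 1)⁻¹) Filter.atTop (nhds 0) := by
    simpa [one_div] using tendsto_one_div_add_atTop_nhds_zero_nat (𝕜 := ℝ)
  have h2 := h1.mul h1
  simp only [mul_zero] at h2
  refine h2.congr fun k => ?_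
  ring

lemma stepC {H : ℝ → ℝ} (hu : ContDiff ℝ 3 u) (hH : ContDiff ℝ 1 H)
    (hstable : ∀ φ : EuclideanSpace ℝ (Fin n) → ℝ,
      ContDiff ℝ 1 φ → HasCompactSupport φ →
      (∫ x, deriv H (u x) * φ x ^ 2) ≤ ∫ x, ‖gradient φ x‖ ^ 2)
    (hη : ContDiff ℝ 1 η) (hηc : HasCompactSupport η) :
    (∫ x : E, deriv H (u x) * Wf u x * η x ^ 2)
      ≤ (∫ x : E, ‖gradient (NM u) x‖ ^ 2 * η x ^ 2)
        + (∫ x : E, η x * ∑ j, pd j (Wf u) x * pd j η x)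
        + ∫ x : E, Wf u x * ∑ j, pd j η x ^ 2 := by
  have hu2 : ContDiff ℝ 2 u := hu.of_le (by norm_num)
  have hW2 := Wf_contDiff hu
  have hW1 : ContDiff ℝ 1 (Wf u) := hW2.of_le (by norm_num)
  have hdHc : Continuous fun x : E => deriv H (u x) :=
    (hH.continuous_deriv le_rfl).comp hu.continuous
  have hpdWc : ∀ j : Fin n, Continuous (pd j (Wf u)) := fun j => continuous_pd hW1 j
  have hpdηc : ∀ j : Fin n, Continuous (pd j η) := fun j => continuous_pd hη j
  -- integrability facts
  have intA : Integrable (fun x : E => deriv H (u x) * Wf u x * η x ^ 2) := by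
    refine integrable_of ((hdHc.mul hW1.continuous).mul (hη.continuous.pow 2)) hηc
      fun x hx => by simp [image_eq_zero_of_notMem_tsupport hx]
  have intB : Integrable (fun x : E => deriv H (u x) * η x ^ 2) := by
    refine integrable_of (hdHc.mul (hη.continuous.pow 2)) hηc
      fun x hx => by simp [image_eq_zero_of_notMem_tsupport hx]
  have intC : Integrable (fun x : E => η x * ∑ j, pd j (Wf u) x * pd j η x) := by
    refine integrable_of
      (hη.continuous.mul (continuous_finset_sum _ fun j _ => (hpdWc j).mul (hpdηc j))) hηc
      fun x hx => by simp [image_eq_zero_of_notMem_tsupport hx]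
  have intRb : Integrable (fun x : E => ∑ j, pd j η x ^ 2) := by
    refine integrable_of (continuous_finset_sum _ fun j _ => (hpdηc j).pow 2) hηc
      fun x hx => Finset.sum_eq_zero fun j _ => by rw [pd_zero_of_nmem hx j]; ring
  have intR : Integrable (fun x : E => Wf u x * ∑ j, pd j η x ^ 2) := by
    refine integrable_of
      (hW1.continuous.mul (continuous_finset_sum _ fun j _ => (hpdηc j).pow 2)) hηc
      fun x hx => by
        rw [Finset.sum_eq_zero fun j _ => by rw [pd_zero_of_nmem hx j]; ring]
        ring
  have intPk : ∀ k : ℕ, Integrable (Pk u η k) := by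
    intro k
    have hc : Continuous (Pk u η k) := by
      unfold Pk
      refine Continuous.div
        ((hη.continuous.pow 2).mul (continuous_finset_sum _ fun j _ => (hpdWc j).pow 2))
        (continuous_const.mul (hW1.continuous.add continuous_const))
        fun x => ?_
      have := Wf_nonneg u x; positivity
    refine integrable_of hc hηc fun x hx => ?_
    unfold Pk
    rw [image_eq_zero_of_notMem_tsupport hx]
    norm_num
  -- the stability inequality applied to φ k = gk k * η
  have stab : ∀ k : ℕ,
      (∫ x : E, deriv H (u x) * Wf u x * η x ^ 2)
          + (((k : ℝ) + 1)⁻¹) ^ 2 * ∫ x : E, deriv H (u x) * η x ^ 2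
        ≤ (∫ x : E, Pk u η k x)
          + (∫ x : E, η x * ∑ j, pd j (Wf u) x * pd j η x)
          + (∫ x : E, Wf u x * ∑ j, pd j η x ^ 2)
          + (((k : ℝ) + 1)⁻¹) ^ 2 * ∫ x : E, ∑ j, pd j η x ^ 2 := by
    intro k
    have hφC1 : ContDiff ℝ 1 (fun x : E => gk u k x * η x) := (gk_contDiff hu k).mul hη
    have hφc : HasCompactSupport (fun x : E => gk u k x * η x) := by
      refine hcs_of (f := fun x : E => gk u k x * η x) hηc fun x hx => by
        simp [image_eq_zero_of_notMem_tsupport hx]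
    have hst := hstable _ hφC1 hφc
    -- rewrite LHS of stability
    have hL : (∫ x : E, deriv H (u x) * (gk u k x * η x) ^ 2)
        = (∫ x : E, deriv H (u x) * Wf u x * η x ^ 2)
          + (((k : ℝ) + 1)⁻¹) ^ 2 * ∫ x : E, deriv H (u x) * η x ^ 2 := by
      have hpt : ∀ x : E, deriv H (u x) * (gk u k x * η x) ^ 2
          = deriv H (u x) * Wf u x * η x ^ 2
            + (((k : ℝ) + 1)⁻¹) ^ 2 * (deriv H (u x) * η x ^ 2) := by
        intro x
        have : (gk u k x * η x) ^ 2 = (Wf u x + (((k : ℝ) + 1)⁻¹) ^ 2) * η x ^ 2 := by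
          rw [mul_pow, gk_sq]
        rw [this]; ring
      rw [integral_congr_ae (Filter.Eventually.of_forall hpt),
        integral_add intA ((intB.const_mul _)), integral_const_mul]
    -- rewrite RHS of stability
    have hR : (∫ x : E, ‖gradient (fun y : E => gk u k y * η y) x‖ ^ 2)
        = (∫ x : E, Pk u η k x)
          + (∫ x : E, η x * ∑ j, pd j (Wf u) x * pd j η x)
          + (∫ x : E, Wf u x * ∑ j, pd j η x ^ 2)
          + (((k : ℝ) + 1)⁻¹) ^ 2 * ∫ x : E, ∑ j, pd j η x ^ 2 := by
      have hpt : ∀ x : E, ‖gradient (fun y : E => gk u k y * η y) x‖ ^ 2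
          = Pk u η k x + η x * (∑ j, pd j (Wf u) x * pd j η x)
            + Wf u x * (∑ j, pd j η x ^ 2)
            + (((k : ℝ) + 1)⁻¹) ^ 2 * ∑ j, pd j η x ^ 2 := by
        intro x
        have hgne : gk u k x ≠ 0 := ne_of_gt (gk_pos u k x)
        have hperj : ∀ j : Fin n, pd j (fun y : E => gk u k y * η y) x ^ 2
            = η x ^ 2 * pd j (Wf u) x ^ 2 / (4 * (Wf u x + (((k : ℝ) + 1)⁻¹) ^ 2))
              + η x * (pd j (Wf u) x * pd j η x)
              + (Wf u x + (((k : ℝ) + 1)⁻¹) ^ 2) * pd j η x ^ 2 := by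
          intro j
          rw [pd_mul (((gk_contDiff hu k).differentiable one_ne_zero) x)
            ((hη.differentiable one_ne_zero) x) j, pd_gk hu k x j, ← gk_sq u k x]
          field_simp
          ring
        rw [norm_grad_sq]
        calc (∑ j, pd j (fun y : E => gk u k y * η y) x ^ 2)
            = ∑ j, (η x ^ 2 * pd j (Wf u) x ^ 2 / (4 * (Wf u x + (((k : ℝ) + 1)⁻¹) ^ 2))
              + (η x * (pd j (Wf u) x * pd j η x)
              + (Wf u x + (((k : ℝ) + 1)⁻¹) ^ 2) * pd j η x ^ 2)) := by
              refine Finset.sum_congr rfl fun j _ => ?_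
              rw [hperj j]; ring
          _ = (∑ j, η x ^ 2 * pd j (Wf u) x ^ 2 / (4 * (Wf u x + (((k : ℝ) + 1)⁻¹) ^ 2)))
              + ((∑ j, η x * (pd j (Wf u) x * pd j η x))
              + ∑ j, (Wf u x + (((k : ℝ) + 1)⁻¹) ^ 2) * pd j η x ^ 2) := by
              rw [← Finset.sum_add_distrib, ← Finset.sum_add_distrib]
          _ = Pk u η k x + η x * (∑ j, pd j (Wf u) x * pd j η x)
              + Wf u x * (∑ j, pd j η x ^ 2)
              + (((k : ℝ) + 1)⁻¹) ^ 2 * ∑ j, pd j η x ^ 2 := by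
              rw [← Finset.mul_sum, ← Finset.mul_sum]
              unfold Pk
              rw [show (∑ j, η x ^ 2 * pd j (Wf u) x ^ 2 / (4 * (Wf u x + (((k : ℝ) + 1)⁻¹) ^ 2)))
                  = η x ^ 2 * (∑ j, pd j (Wf u) x ^ 2) / (4 * (Wf u x + (((k : ℝ) + 1)⁻¹) ^ 2)) by
                rw [Finset.mul_sum, Finset.sum_div]]
              ring
      calc (∫ x : E, ‖gradient (fun y : E => gk u k y * η y) x‖ ^ 2)
          = ∫ x : E, (Pk u η k x + η x * (∑ j, pd j (Wf u) x * pd j η x)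
              + Wf u x * (∑ j, pd j η x ^ 2)
              + (((k : ℝ) + 1)⁻¹) ^ 2 * ∑ j, pd j η x ^ 2) :=
            integral_congr_ae (Filter.Eventually.of_forall hpt)
        _ = (∫ x : E, (Pk u η k x + η x * (∑ j, pd j (Wf u) x * pd j η x)
              + Wf u x * (∑ j, pd j η x ^ 2)))
              + ∫ x : E, (((k : ℝ) + 1)⁻¹) ^ 2 * ∑ j, pd j η x ^ 2 :=
            integral_add (((intPk k).add intC).add intR) (intRb.const_mul _)
        _ = ((∫ x : E, (Pk u η k x + η x * (∑ j, pd j (Wf u) x * pd j η x)))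
              + ∫ x : E, Wf u x * (∑ j, pd j η x ^ 2))
              + ∫ x : E, (((k : ℝ) + 1)⁻¹) ^ 2 * ∑ j, pd j η x ^ 2 := by
            have e3 : (∫ x : E, (Pk u η k x + η x * (∑ j, pd j (Wf u) x * pd j η x)
                + Wf u x * (∑ j, pd j η x ^ 2)))
                = (∫ x : E, (Pk u η k x + η x * (∑ j, pd j (Wf u) x * pd j η x)))
                  + ∫ x : E, Wf u x * (∑ j, pd j η x ^ 2) :=
              integral_add ((intPk k).add intC) intR
            rw [e3]
        _ = (((∫ x : E, Pk u η k x) + ∫ x : E, η x * (∑ j, pd j (Wf u) x * pd j η x))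
              + ∫ x : E, Wf u x * (∑ j, pd j η x ^ 2))
              + ∫ x : E, (((k : ℝ) + 1)⁻¹) ^ 2 * ∑ j, pd j η x ^ 2 := by
            have e4 : (∫ x : E, (Pk u η k x + η x * (∑ j, pd j (Wf u) x * pd j η x)))
                = (∫ x : E, Pk u η k x)
                  + ∫ x : E, η x * (∑ j, pd j (Wf u) x * pd j η x) :=
              integral_add (intPk k) intC
            rw [e4]
        _ = (∫ x : E, Pk u η k x)
              + (∫ x : E, η x * ∑ j, pd j (Wf u) x * pd j η x)
              + (∫ x : E, Wf u x * ∑ j, pd j η x ^ 2)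
              + (((k : ℝ) + 1)⁻¹) ^ 2 * ∫ x : E, ∑ j, pd j η x ^ 2 := by
            rw [integral_const_mul]
    calc (∫ x : E, deriv H (u x) * Wf u x * η x ^ 2)
          + (((k : ℝ) + 1)⁻¹) ^ 2 * ∫ x : E, deriv H (u x) * η x ^ 2
        = ∫ x : E, deriv H (u x) * (gk u k x * η x) ^ 2 := hL.symm
      _ ≤ ∫ x : E, ‖gradient (fun y : E => gk u k y * η y) x‖ ^ 2 := hst
      _ = _ := hR
  -- Cauchy–Schwarz bound
  have hkey : ∀ x : E, (∑ j, pd j (Wf u) x ^ 2) ≤ 4 * Wf u x * Sf u x := by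
    intro x
    calc (∑ j, pd j (Wf u) x ^ 2)
        ≤ ∑ j, 4 * Wf u x * ∑ i, pd j (pd i u) x ^ 2 :=
          Finset.sum_le_sum fun j _ => pd_Wf_sq_le hu j x
      _ = 4 * Wf u x * ∑ j : Fin n, ∑ i, pd j (pd i u) x ^ 2 := by rw [Finset.mul_sum]
      _ = 4 * Wf u x * Sf u x := by
          congr 1
          unfold Sf
          refine Finset.sum_congr rfl fun j _ => Finset.sum_congr rfl fun i _ => ?_
          rw [pd_symm hu2 j i x]
  -- dominated convergence for ∫ Pk
  have boundInt : Integrable (fun x : E => η x ^ 2 * Sf u x) := by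
    refine integrable_of ((hη.continuous.pow 2).mul (Sf_continuous hu)) hηc
      fun x hx => by simp [image_eq_zero_of_notMem_tsupport hx]
  have hbound : ∀ k : ℕ, ∀ x : E, ‖Pk u η k x‖ ≤ η x ^ 2 * Sf u x := by
    intro k x
    have hWnn := Wf_nonneg u x
    have hden : (0:ℝ) < 4 * (Wf u x + (((k : ℝ) + 1)⁻¹) ^ 2) := by positivity
    have hnn : 0 ≤ Pk u η k x := by
      unfold Pk
      exact div_nonneg (by positivity) (le_of_lt hden)
    rw [Real.norm_eq_abs, abs_of_nonneg hnn]
    unfold Pk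
    rw [div_le_iff₀ hden]
    have h1 : η x ^ 2 * (∑ j, pd j (Wf u) x ^ 2) ≤ η x ^ 2 * (4 * Wf u x * Sf u x) :=
      mul_le_mul_of_nonneg_left (hkey x) (sq_nonneg _)
    nlinarith [mul_nonneg (mul_nonneg (Sf_nonneg u x) (sq_nonneg (η x)))
      (sq_nonneg (((k : ℝ) + 1)⁻¹))]
  have hlim : ∀ x : E, Filter.Tendsto (fun k : ℕ => Pk u η k x) Filter.atTop
      (nhds (‖gradient (NM u) x‖ ^ 2 * η x ^ 2)) := by
    intro x
    rcases (Wf_nonneg u x).eq_or_lt with h0 | hpos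
    · have hz : ∀ k : ℕ, Pk u η k x = 0 := by
        intro k
        unfold Pk
        rw [Finset.sum_eq_zero fun j _ => by rw [pd_Wf_zero hu h0.symm j]; ring]
        simp
      have hv : ‖gradient (NM u) x‖ ^ 2 * η x ^ 2 = 0 := by
        rw [grad_NM_zero h0.symm]; simp
      rw [hv]
      exact Filter.Tendsto.congr (fun k => (hz k).symm) tendsto_const_nhds
    · have hval : ‖gradient (NM u) x‖ ^ 2 * η x ^ 2
          = (∑ j, pd j (Wf u) x ^ 2) / (4 * Wf u x) * η x ^ 2 := by
        rw [grad_NM_sq hu hpos]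
      rw [hval]
      have hden : Filter.Tendsto (fun k : ℕ => 4 * (Wf u x + (((k : ℝ) + 1)⁻¹) ^ 2))
          Filter.atTop (nhds (4 * (Wf u x + 0))) :=
        (tendsto_const_nhds.add eps_sq_tendsto).const_mul 4
      have hne : (4 : ℝ) * (Wf u x + 0) ≠ 0 := by
        rw [add_zero]; exact ne_of_gt (by linarith)
      have hdiv := (tendsto_const_nhds
        (x := η x ^ 2 * (∑ j, pd j (Wf u) x ^ 2)) (f := Filter.atTop (α := ℕ))).div hden hne
      have heqv : η x ^ 2 * (∑ j, pd j (Wf u) x ^ 2) / (4 * (Wf u x + 0))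
          = (∑ j, pd j (Wf u) x ^ 2) / (4 * Wf u x) * η x ^ 2 := by
        rw [add_zero]; ring
      rw [heqv] at hdiv
      exact hdiv
  have hP : Filter.Tendsto (fun k : ℕ => ∫ x : E, Pk u η k x) Filter.atTop
      (nhds (∫ x : E, ‖gradient (NM u) x‖ ^ 2 * η x ^ 2)) := by
    refine tendsto_integral_of_dominated_convergence (fun x => η x ^ 2 * Sf u x)
      (fun k => ((intPk k).aestronglyMeasurable)) boundInt
      (fun k => Filter.Eventually.of_forall (hbound k))
      (Filter.Eventually.of_forall hlim)
  -- pass to the limit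
  have hB := eps_sq_tendsto.mul_const (∫ x : E, deriv H (u x) * η x ^ 2)
  rw [zero_mul] at hB
  have hLlim := (tendsto_const_nhds
    (x := ∫ x : E, deriv H (u x) * Wf u x * η x ^ 2) (f := Filter.atTop (α := ℕ))).add hB
  rw [add_zero] at hLlim
  have hRb := eps_sq_tendsto.mul_const (∫ x : E, ∑ j, pd j η x ^ 2)
  rw [zero_mul] at hRb
  have hRlim := ((hP.add (tendsto_const_nhds
      (x := ∫ x : E, η x * ∑ j, pd j (Wf u) x * pd j η x) (f := Filter.atTop (α := ℕ)))).add
    (tendsto_const_nhds (x := ∫ x : E, Wf u x * ∑ j, pd j η x ^ 2)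
      (f := Filter.atTop (α := ℕ)))).add hRb
  rw [add_zero] at hRlim
  exact le_of_tendsto_of_tendsto' hLlim hRlim stab

lemma intP0' (hu : ContDiff ℝ 3 u) (hη : ContDiff ℝ 1 η) (hηc : HasCompactSupport η) :
    Integrable (fun x : E => ‖gradient (NM u) x‖ ^ 2 * η x ^ 2) := by
  have hu2 : ContDiff ℝ 2 u := hu.of_le (by norm_num)
  have hkey : ∀ x : E, (∑ j, pd j (Wf u) x ^ 2) ≤ 4 * Wf u x * Sf u x := by
    intro x
    calc (∑ j, pd j (Wf u) x ^ 2)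
        ≤ ∑ j, 4 * Wf u x * ∑ i, pd j (pd i u) x ^ 2 :=
          Finset.sum_le_sum fun j _ => pd_Wf_sq_le hu j x
      _ = 4 * Wf u x * ∑ j : Fin n, ∑ i, pd j (pd i u) x ^ 2 := by rw [Finset.mul_sum]
      _ = 4 * Wf u x * Sf u x := by
          congr 1
          unfold Sf
          refine Finset.sum_congr rfl fun j _ => Finset.sum_congr rfl fun i _ => ?_
          rw [pd_symm hu2 j i x]
  have boundInt : Integrable (fun x : E => η x ^ 2 * Sf u x) := by
    refine integrable_of ((hη.continuous.pow 2).mul (Sf_continuous hu)) hηc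
      fun x hx => by simp [image_eq_zero_of_notMem_tsupport hx]
  have hmeas : AEStronglyMeasurable (fun x : E => ‖gradient (NM u) x‖ ^ 2 * η x ^ 2) volume := by
    have h1 : Measurable fun x : E => gradient (NM u) x := by
      have h2 : Measurable fun x : E => fderiv ℝ (NM u) x := measurable_fderiv ℝ (NM u)
      exact ((InnerProductSpace.toDual ℝ (EuclideanSpace ℝ (Fin n))).symm.continuous.measurable).comp h2
    exact ((((h1.norm).pow_const 2).mul
      ((hη.continuous.pow 2).measurable)).aestronglyMeasurable)
  refine Integrable.mono' boundInt hmeas (Filter.Eventually.of_forall fun x => ?_)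
  have hnn : (0:ℝ) ≤ ‖gradient (NM u) x‖ ^ 2 * η x ^ 2 := by positivity
  rw [Real.norm_eq_abs, abs_of_nonneg hnn]
  rcases (Wf_nonneg u x).eq_or_lt with h0 | hpos
  · rw [grad_NM_zero h0.symm]
    have : (0:ℝ) ≤ η x ^ 2 * Sf u x := mul_nonneg (sq_nonneg _) (Sf_nonneg u x)
    simpa using this
  · rw [grad_NM_sq hu hpos]
    have h3 : (∑ j, pd j (Wf u) x ^ 2) / (4 * Wf u x) ≤ Sf u x := by
      rw [div_le_iff₀ (by linarith)]
      calc (∑ j, pd j (Wf u) x ^ 2) ≤ 4 * Wf u x * Sf u x := hkey x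
        _ = Sf u x * (4 * Wf u x) := by ring
    calc (∑ j, pd j (Wf u) x ^ 2) / (4 * Wf u x) * η x ^ 2
        ≤ Sf u x * η x ^ 2 := mul_le_mul_of_nonneg_right h3 (sq_nonneg _)
      _ = η x ^ 2 * Sf u x := by ring

end Main
theorem weighted_poincare_scalar {n : ℕ}
    (u : EuclideanSpace ℝ (Fin n) → ℝ) (hu : ContDiff ℝ 3 u)
    (H : ℝ → ℝ) (hH : ContDiff ℝ 1 H)
    (heq : ∀ x, -lap u x = H (u x))
    (hstable : ∀ φ : EuclideanSpace ℝ (Fin n) → ℝ,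
      ContDiff ℝ 1 φ → HasCompactSupport φ →
      (∫ x, deriv H (u x) * φ x ^ 2) ≤ ∫ x, ‖gradient φ x‖ ^ 2)
    (η : EuclideanSpace ℝ (Fin n) → ℝ)
    (hη : ContDiff ℝ 1 η) (hηc : HasCompactSupport η) :
    (∫ x, (hessFrobSq u x - ‖gradient (fun y => ‖gradient u y‖) x‖ ^ 2) * η x ^ 2) ≤
      ∫ x, ‖gradient u x‖ ^ 2 * ‖gradient η x‖ ^ 2 := by
  have hD := stepD hu hH heq hη hηc
  have hC := stepC hu hH hstable hη hηc
  have intS : Integrable (fun x : EuclideanSpace ℝ (Fin n) => Sf u x * η x ^ 2) := by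
    refine integrable_of ((Sf_continuous hu).mul (hη.continuous.pow 2)) hηc
      fun x hx => by simp [image_eq_zero_of_notMem_tsupport hx]
  have intP0 := intP0' hu hη hηc
  have hg1 : ∀ x : EuclideanSpace ℝ (Fin n),
      (hessFrobSq u x - ‖gradient (fun y => ‖gradient u y‖) x‖ ^ 2) * η x ^ 2
        = Sf u x * η x ^ 2 - ‖gradient (NM u) x‖ ^ 2 * η x ^ 2 := by
    intro x
    rw [Sf_eq, NM_eq]
    ring
  have hg2 : ∀ x : EuclideanSpace ℝ (Fin n),
      ‖gradient u x‖ ^ 2 * ‖gradient η x‖ ^ 2 = Wf u x * ∑ j, pd j η x ^ 2 := by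
    intro x
    rw [Wf_eq, norm_grad_sq]
  calc (∫ x, (hessFrobSq u x - ‖gradient (fun y => ‖gradient u y‖) x‖ ^ 2) * η x ^ 2)
      = ∫ x : EuclideanSpace ℝ (Fin n),
          (Sf u x * η x ^ 2 - ‖gradient (NM u) x‖ ^ 2 * η x ^ 2) :=
        integral_congr_ae (Filter.Eventually.of_forall hg1)
    _ = (∫ x : EuclideanSpace ℝ (Fin n), Sf u x * η x ^ 2)
          - ∫ x : EuclideanSpace ℝ (Fin n), ‖gradient (NM u) x‖ ^ 2 * η x ^ 2 :=
        integral_sub intS intP0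
    _ ≤ ∫ x : EuclideanSpace ℝ (Fin n), Wf u x * ∑ j, pd j η x ^ 2 := by linarith
    _ = ∫ x, ‖gradient u x‖ ^ 2 * ‖gradient η x‖ ^ 2 :=
        (integral_congr_ae (Filter.Eventually.of_forall hg2)).symm
end

section
/- If u ∈ C³(ℝⁿ) satisfies the weighted Poincaré inequality ∫ (‖Hess u‖² − ‖∇‖∇u‖‖²)·η² ≤ ∫ ‖∇u‖²·‖∇η‖² for all compactly supported Lipschitz η, and ∇u ∈ L^∞, and there exist compactly supported Lipschitz functions η_ε equal to 1 on a fixed ball B with ∫ ‖∇η_ε‖² ≤ ε, then ∫_B (‖Hess u‖² − ‖∇‖∇u‖‖²) = 0, and hence by the equality case of Kato's inequality, at every point p ∈ B with ∇u(p) ≠ 0 every row of Hess u(p) is parallel to ∇u(p). -/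
open MeasureTheory Metric

section Aux

open InnerProductSpace

lemma inner_gradient {n : ℕ} (f : EuclideanSpace ℝ (Fin n) → ℝ)
    (x w : EuclideanSpace ℝ (Fin n)) :
    ⟪gradient f x, w⟫_ℝ = fderiv ℝ f x w := by
  simp [gradient, InnerProductSpace.toDual_symm_apply]

lemma grad_coord {n : ℕ} (f : EuclideanSpace ℝ (Fin n) → ℝ) (x : EuclideanSpace ℝ (Fin n))
    (k : Fin n) :
    gradient f x k = fderiv ℝ f x (EuclideanSpace.single k 1) := by
  rw [← inner_gradient, EuclideanSpace.inner_single_right]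
  simp

lemma norm_gradient_eq {n : ℕ} (f : EuclideanSpace ℝ (Fin n) → ℝ) (x : EuclideanSpace ℝ (Fin n)) :
    ‖gradient f x‖ = ‖fderiv ℝ f x‖ := by
  simp [gradient]

lemma norm_sq_coords {n : ℕ} (x : EuclideanSpace ℝ (Fin n)) : ‖x‖ ^ 2 = ∑ i, x i ^ 2 := by
  rw [EuclideanSpace.norm_eq, Real.sq_sqrt (by positivity)]
  simp [sq_abs]

lemma grad_measurable {n : ℕ} (f : EuclideanSpace ℝ (Fin n) → ℝ) : Measurable (gradient f) := by
  have h : Measurable (fderiv ℝ f) := measurable_fderiv ℝ f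
  exact ((InnerProductSpace.toDual ℝ _).symm.continuous.measurable).comp h

lemma grad_continuous {n : ℕ} (f : EuclideanSpace ℝ (Fin n) → ℝ) (hf : ContDiff ℝ 2 f) :
    Continuous (gradient f) := by
  have h : Continuous (fderiv ℝ f) := hf.continuous_fderiv (by norm_num)
  exact ((InnerProductSpace.toDual ℝ _).symm.continuous).comp h

section U
variable {n : ℕ} (u : EuclideanSpace ℝ (Fin n) → ℝ) (hu : ContDiff ℝ 3 u)

lemma uk_eq (k : Fin n) :
    (fun x => gradient u x k) = fun x => fderiv ℝ u x (EuclideanSpace.single k 1) := by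
  funext x; exact grad_coord u x k

lemma unit_v (p : EuclideanSpace ℝ (Fin n)) (hp : gradient u p ≠ 0) :
    ‖(‖gradient u p‖⁻¹ • gradient u p : EuclideanSpace ℝ (Fin n))‖ = 1 := by
  rw [norm_smul]
  have : ‖gradient u p‖ ≠ 0 := by simpa using hp
  simp [abs_of_nonneg, this]

lemma gradN_zero (p : EuclideanSpace ℝ (Fin n)) (hp : gradient u p = 0) :
    gradient (fun y => ‖gradient u y‖) p = 0 := by
  have hmin : IsLocalMin (fun y => ‖gradient u y‖) p :=
    Filter.Eventually.of_forall fun y => by simp [hp]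
  have h := hmin.fderiv_eq_zero
  show (InnerProductSpace.toDual ℝ _).symm (fderiv ℝ (fun y => ‖gradient u y‖) p) = 0
  rw [h]; simp

include hu

lemma contDiff_fderiv_apply (k : Fin n) :
    ContDiff ℝ 2 (fun x => fderiv ℝ u x (EuclideanSpace.single k 1)) :=
  (ContinuousLinearMap.apply ℝ ℝ (EuclideanSpace.single k (1:ℝ))).contDiff.comp
    (hu.fderiv_right (m := 2) (by norm_num))

lemma hasFDerivAt_uk (k : Fin n) (p : EuclideanSpace ℝ (Fin n)) :
    HasFDerivAt (fun x => fderiv ℝ u x (EuclideanSpace.single k 1))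
      ((ContinuousLinearMap.apply ℝ ℝ (EuclideanSpace.single k (1:ℝ))).comp
        (fderiv ℝ (fderiv ℝ u) p)) p := by
  have h1 : HasFDerivAt (fderiv ℝ u) (fderiv ℝ (fderiv ℝ u) p) p := by
    have h2 : ContDiff ℝ 2 (fderiv ℝ u) := hu.fderiv_right (m := 2) (by norm_num)
    exact (h2.differentiable (by norm_num) p).hasFDerivAt
  exact (ContinuousLinearMap.apply ℝ ℝ (EuclideanSpace.single k (1:ℝ))).hasFDerivAt.comp p h1

lemma hess_sym (p v w : EuclideanSpace ℝ (Fin n)) :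
    fderiv ℝ (fderiv ℝ u) p v w = fderiv ℝ (fderiv ℝ u) p w v := by
  apply second_derivative_symmetric (f := u)
  · intro y
    exact ((hu.differentiable (by norm_num)) y).hasFDerivAt
  · have h2 : ContDiff ℝ 2 (fderiv ℝ u) := hu.fderiv_right (m := 2) (by norm_num)
    exact (h2.differentiable (by norm_num) p).hasFDerivAt

lemma Hcoord (p : EuclideanSpace ℝ (Fin n)) (k j : Fin n) :
    gradient (fun x => gradient u x k) p j
      = fderiv ℝ (fderiv ℝ u) p (EuclideanSpace.single j 1) (EuclideanSpace.single k 1) := by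
  rw [grad_coord, uk_eq u, (hasFDerivAt_uk u hu k p).fderiv]
  rfl

lemma Hcont (k : Fin n) : Continuous (gradient (fun x => gradient u x k)) := by
  rw [uk_eq u]
  exact grad_continuous _ (contDiff_fderiv_apply u hu k)

lemma hessFrobSq_cont : Continuous (hessFrobSq u) := by
  unfold hessFrobSq
  exact continuous_finset_sum _ fun k _ => ((Hcont u hu k).norm.pow 2)

lemma hasFDerivAt_Q (p : EuclideanSpace ℝ (Fin n)) :
    HasFDerivAt (fun x => ∑ j, (fderiv ℝ u x (EuclideanSpace.single j 1)) ^ 2)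
      (∑ j, (2 * fderiv ℝ u p (EuclideanSpace.single j 1)) •
        ((ContinuousLinearMap.apply ℝ ℝ (EuclideanSpace.single j (1:ℝ))).comp
          (fderiv ℝ (fderiv ℝ u) p))) p := by
  apply HasFDerivAt.fun_sum
  intro j _
  have h := (hasFDerivAt_uk u hu j p).fun_mul (hasFDerivAt_uk u hu j p)
  have e2 : (fun x => (fderiv ℝ u x) (EuclideanSpace.single j 1) ^ 2)
      = fun x => (fderiv ℝ u x) (EuclideanSpace.single j 1)
          * (fderiv ℝ u x) (EuclideanSpace.single j 1) := by
    funext x; ring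
  rw [e2]
  refine h.congr_fderiv ?_
  rw [two_mul, add_smul]

omit hu in
lemma Q_eq (x : EuclideanSpace ℝ (Fin n)) :
    ‖gradient u x‖ = Real.sqrt (∑ j, (fderiv ℝ u x (EuclideanSpace.single j 1)) ^ 2) := by
  rw [EuclideanSpace.norm_eq]
  congr 1
  refine Finset.sum_congr rfl fun j _ => ?_
  rw [← grad_coord, Real.norm_eq_abs, sq_abs]

lemma hasFDerivAt_N (p : EuclideanSpace ℝ (Fin n)) (hp : gradient u p ≠ 0) :
    HasFDerivAt (fun y => ‖gradient u y‖)
      ((1 / (2 * ‖gradient u p‖)) • (∑ j, (2 * fderiv ℝ u p (EuclideanSpace.single j 1)) •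
        ((ContinuousLinearMap.apply ℝ ℝ (EuclideanSpace.single j (1:ℝ))).comp
          (fderiv ℝ (fderiv ℝ u) p)))) p := by
  have hQ0 : (∑ j, (fderiv ℝ u p (EuclideanSpace.single j 1)) ^ 2) ≠ 0 := by
    have h1 : Real.sqrt (∑ j, (fderiv ℝ u p (EuclideanSpace.single j 1)) ^ 2) ≠ 0 := by
      rw [← Q_eq u]
      simpa using hp
    intro h; rw [h] at h1; simp at h1
  have h := (hasFDerivAt_Q u hu p).sqrt hQ0
  have heq : (fun y => ‖gradient u y‖) =
      fun y => Real.sqrt (∑ j, (fderiv ℝ u y (EuclideanSpace.single j 1)) ^ 2) := by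
    funext y; exact Q_eq u y
  rw [heq, Q_eq u p]
  simpa using h

lemma gradN_coord (p : EuclideanSpace ℝ (Fin n)) (hp : gradient u p ≠ 0) (k : Fin n) :
    gradient (fun y => ‖gradient u y‖) p k =
      ⟪gradient (fun x => gradient u x k) p, ‖gradient u p‖⁻¹ • gradient u p⟫_ℝ := by
  rw [grad_coord, (hasFDerivAt_N u hu p hp).fderiv]
  have hnorm : ‖gradient u p‖ ≠ 0 := by simpa using hp
  rw [real_inner_smul_right]
  have hinner : ⟪gradient (fun x => gradient u x k) p, gradient u p⟫_ℝ
      = ∑ j, fderiv ℝ (fderiv ℝ u) p (EuclideanSpace.single k 1) (EuclideanSpace.single j 1)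
          * gradient u p j := by
    rw [PiLp.inner_apply]
    refine Finset.sum_congr rfl fun j _ => ?_
    rw [Hcoord u hu, hess_sym u hu]
    simp [mul_comm]
  rw [hinner]
  simp only [ContinuousLinearMap.smul_apply, ContinuousLinearMap.sum_apply,
    ContinuousLinearMap.coe_comp', Function.comp_apply, ContinuousLinearMap.apply_apply,
    smul_eq_mul, Finset.mul_sum, Finset.sum_apply]
  refine Finset.sum_congr rfl fun j _ => ?_
  rw [← grad_coord u p j]
  field_simp

omit hu in
lemma cs_sq_le (a b : EuclideanSpace ℝ (Fin n)) (hb : ‖b‖ = 1) :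
    ⟪a, b⟫_ℝ ^ 2 ≤ ‖a‖ ^ 2 := by
  calc ⟪a, b⟫_ℝ ^ 2 = |⟪a, b⟫_ℝ| ^ 2 := (sq_abs _).symm
    _ ≤ (‖a‖ * ‖b‖) ^ 2 := pow_le_pow_left₀ (abs_nonneg _) (abs_real_inner_le_norm _ _) 2
    _ = ‖a‖ ^ 2 := by rw [hb]; ring

lemma kato (x : EuclideanSpace ℝ (Fin n)) :
    ‖gradient (fun y => ‖gradient u y‖) x‖ ^ 2 ≤ hessFrobSq u x := by
  unfold hessFrobSq
  rcases eq_or_ne (gradient u x) 0 with hx | hx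
  · rw [gradN_zero u x hx]
    simp only [norm_zero]
    have h0 : (0:ℝ) ^ 2 = 0 := by norm_num
    rw [h0]
    positivity
  · rw [norm_sq_coords]
    apply Finset.sum_le_sum
    intro k _
    rw [gradN_coord u hu x hx k]
    calc ⟪gradient (fun y => gradient u y k) x,
          ‖gradient u x‖⁻¹ • gradient u x⟫_ℝ ^ 2
        ≤ (‖gradient (fun y => gradient u y k) x‖
            * ‖(‖gradient u x‖⁻¹ • gradient u x : EuclideanSpace ℝ (Fin n))‖) ^ 2 := by
          rw [← sq_abs]
          exact pow_le_pow_left₀ (abs_nonneg _) (abs_real_inner_le_norm _ _) 2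
      _ = ‖gradient (fun y => gradient u y k) x‖ ^ 2 := by
          rw [unit_v u x hx]; ring

end U
end Aux

theorem poincare_implies_rigidity {n : ℕ}
    (u : EuclideanSpace ℝ (Fin n) → ℝ) (hu : ContDiff ℝ 3 u)
    (hpoin : ∀ η : EuclideanSpace ℝ (Fin n) → ℝ,
      (∃ K, LipschitzWith K η) → HasCompactSupport η →
      (∫ x, (hessFrobSq u x - ‖gradient (fun y => ‖gradient u y‖) x‖ ^ 2) * η x ^ 2) ≤
        ∫ x, ‖gradient u x‖ ^ 2 * ‖gradient η x‖ ^ 2)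
    (M : ℝ) (hM : ∀ x, ‖gradient u x‖ ≤ M)
    (x₀ : EuclideanSpace ℝ (Fin n)) (r : ℝ) (hr : 0 < r)
    (hcut : ∀ ε > (0 : ℝ), ∃ η : EuclideanSpace ℝ (Fin n) → ℝ,
      (∃ K, LipschitzWith K η) ∧ HasCompactSupport η ∧
      (∀ x ∈ ball x₀ r, η x = 1) ∧ (∫ x, ‖gradient η x‖ ^ 2) ≤ ε) :
    (∫ x in ball x₀ r,
        (hessFrobSq u x - ‖gradient (fun y => ‖gradient u y‖) x‖ ^ 2)) = 0 ∧
    ∀ p ∈ ball x₀ r, gradient u p ≠ 0 →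
      ∀ k : Fin n, ∃ κ : ℝ,
        gradient (fun x => gradient u x k) p = κ • gradient u p := by
  classical
  open InnerProductSpace in
  set g : EuclideanSpace ℝ (Fin n) → ℝ :=
    fun x => hessFrobSq u x - ‖gradient (fun y => ‖gradient u y‖) x‖ ^ 2 with hg_def
  have hg0 : ∀ x, 0 ≤ g x := fun x => sub_nonneg.2 (kato u hu x)
  have hgmeas : Measurable g := by
    rw [hg_def]
    exact (hessFrobSq_cont u hu).measurable.sub ((grad_measurable _).norm.pow_const 2)
  have hgle : ∀ x, g x ≤ hessFrobSq u x := fun x => by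
    have h := sq_nonneg ‖gradient (fun y => ‖gradient u y‖) x‖
    rw [hg_def]; dsimp only; linarith
  have integrable_aux : ∀ f : EuclideanSpace ℝ (Fin n) → ℝ, AEStronglyMeasurable f volume →
      ∀ K : Set (EuclideanSpace ℝ (Fin n)), IsCompact K → Function.support f ⊆ K →
      ∀ C : ℝ, (∀ x ∈ K, ‖f x‖ ≤ C) → Integrable f := by
    intro f hf K hK hsupp C hC
    rw [← integrableOn_iff_integrable_of_support_subset hsupp]
    exact Measure.integrableOn_of_bounded hK.measure_lt_top.ne hf
      (ae_restrict_of_forall_mem hK.isClosed.measurableSet hC)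
  -- Part 1
  have key : ∀ ε > (0:ℝ), (∫ x in ball x₀ r, g x) ≤ M ^ 2 * ε := by
    intro ε hε
    obtain ⟨η, hηlip, hηc, hη1, hηε⟩ := hcut ε hε
    obtain ⟨K, hK⟩ := hηlip
    have hηcont : Continuous η := hK.continuous
    obtain ⟨C₁, hC₁⟩ := (hηc.isCompact).exists_bound_of_continuousOn
      ((hessFrobSq_cont u hu).continuousOn)
    obtain ⟨C₂, hC₂⟩ := hηc.exists_bound_of_continuous hηcont
    have hsupp_gη : Function.support (fun x => g x * η x ^ 2) ⊆ tsupport η := by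
      intro x hx
      by_contra hxs
      have h0 : η x = 0 := image_eq_zero_of_notMem_tsupport hxs
      simp [Function.mem_support, h0] at hx
    have hint1 : Integrable (fun x => g x * η x ^ 2) := by
      refine integrable_aux _ ?_ _ hηc.isCompact hsupp_gη (C₁ * C₂ ^ 2) ?_
      · exact (hgmeas.mul ((hηcont.measurable).pow_const 2)).aestronglyMeasurable
      · intro x hx
        have h1 : ‖g x‖ ≤ C₁ := by
          rw [Real.norm_eq_abs, abs_of_nonneg (hg0 x)]
          exact le_trans (hgle x) (le_trans (le_abs_self _) (hC₁ x hx))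
        calc ‖g x * η x ^ 2‖ = ‖g x‖ * ‖η x‖ ^ 2 := by rw [norm_mul, norm_pow]
          _ ≤ C₁ * C₂ ^ 2 :=
            mul_le_mul h1 (pow_le_pow_left₀ (norm_nonneg _) (hC₂ x) 2) (by positivity)
              (le_trans (norm_nonneg _) h1)
    have hgradη_supp : Function.support (fun x => ‖gradient η x‖ ^ 2) ⊆ tsupport η := by
      intro x hx
      by_contra hxs
      have hfd : fderiv ℝ η x = 0 := by
        by_contra h0
        exact hxs (support_fderiv_subset ℝ h0)
      have hgη : gradient η x = 0 := by
        show (InnerProductSpace.toDual ℝ _).symm (fderiv ℝ η x) = 0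
        rw [hfd]; simp
      simp [Function.mem_support, hgη] at hx
    have hηgrad_bound : ∀ x, ‖gradient η x‖ ≤ (K:ℝ) := fun x => by
      rw [norm_gradient_eq]
      exact norm_fderiv_le_of_lipschitz ℝ hK
    have hint2 : Integrable (fun x => ‖gradient η x‖ ^ 2) := by
      refine integrable_aux _ ?_ _ hηc.isCompact hgradη_supp ((K:ℝ) ^ 2) ?_
      · exact ((grad_measurable η).norm.pow_const 2).aestronglyMeasurable
      · intro x _
        rw [Real.norm_eq_abs, abs_of_nonneg (by positivity)]
        exact pow_le_pow_left₀ (norm_nonneg _) (hηgrad_bound x) 2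
    have hint3 : Integrable (fun x => ‖gradient u x‖ ^ 2 * ‖gradient η x‖ ^ 2) := by
      refine (hint2.const_mul (M ^ 2)).mono ?_ ?_
      · exact (((grad_continuous u (hu.of_le (by norm_num))).norm.pow 2).measurable.mul
          ((grad_measurable η).norm.pow_const 2)).aestronglyMeasurable
      · refine Filter.Eventually.of_forall fun x => ?_
        have hMx : ‖gradient u x‖ ^ 2 ≤ M ^ 2 :=
          pow_le_pow_left₀ (norm_nonneg _) (hM x) 2
        rw [Real.norm_eq_abs, Real.norm_eq_abs, abs_of_nonneg (by positivity),
          abs_of_nonneg (by positivity)]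
        exact mul_le_mul_of_nonneg_right hMx (by positivity)
    have step1 : (∫ x in ball x₀ r, g x) = ∫ x in ball x₀ r, g x * η x ^ 2 := by
      refine setIntegral_congr_fun measurableSet_ball fun x hx => ?_
      rw [hη1 x hx]; ring
    have step2 : (∫ x in ball x₀ r, g x * η x ^ 2) ≤ ∫ x, g x * η x ^ 2 :=
      setIntegral_le_integral hint1
        (Filter.Eventually.of_forall fun x => mul_nonneg (hg0 x) (sq_nonneg _))
    have step3 : (∫ x, g x * η x ^ 2) ≤ ∫ x, ‖gradient u x‖ ^ 2 * ‖gradient η x‖ ^ 2 := by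
      rw [hg_def]
      exact hpoin η ⟨K, hK⟩ hηc
    have step4 : (∫ x, ‖gradient u x‖ ^ 2 * ‖gradient η x‖ ^ 2)
        ≤ M ^ 2 * ∫ x, ‖gradient η x‖ ^ 2 := by
      have h := integral_mono hint3 (hint2.const_mul (M ^ 2)) (fun x => by
        dsimp only
        exact mul_le_mul_of_nonneg_right (pow_le_pow_left₀ (norm_nonneg _) (hM x) 2)
          (sq_nonneg _))
      rwa [integral_const_mul] at h
    have step5 : M ^ 2 * (∫ x, ‖gradient η x‖ ^ 2) ≤ M ^ 2 * ε :=
      mul_le_mul_of_nonneg_left hηε (sq_nonneg M)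
    calc (∫ x in ball x₀ r, g x) = ∫ x in ball x₀ r, g x * η x ^ 2 := step1
      _ ≤ ∫ x, g x * η x ^ 2 := step2
      _ ≤ ∫ x, ‖gradient u x‖ ^ 2 * ‖gradient η x‖ ^ 2 := step3
      _ ≤ M ^ 2 * ∫ x, ‖gradient η x‖ ^ 2 := step4
      _ ≤ M ^ 2 * ε := step5
  have hI0 : 0 ≤ ∫ x in ball x₀ r, g x :=
    setIntegral_nonneg measurableSet_ball fun x _ => hg0 x
  have part1 : (∫ x in ball x₀ r, g x) = 0 := by
    refine le_antisymm ?_ hI0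
    by_contra h
    push_neg at h
    set I := ∫ x in ball x₀ r, g x with hI
    have hden : (0:ℝ) < 2 * (M ^ 2 + 1) := by positivity
    have hkey := key (I / (2 * (M ^ 2 + 1))) (by positivity)
    rw [mul_div_assoc'] at hkey
    rw [le_div_iff₀ hden] at hkey
    nlinarith [sq_nonneg M, mul_pos h (show (0:ℝ) < M ^ 2 + 2 by positivity)]
  refine ⟨part1, ?_⟩
  -- Part 2
  have hgint : IntegrableOn g (ball x₀ r) := by
    obtain ⟨C, hC⟩ := (isCompact_closedBall x₀ r).exists_bound_of_continuousOn
      ((hessFrobSq_cont u hu).continuousOn)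
    refine Measure.integrableOn_of_bounded (M := C) measure_ball_lt_top.ne
      hgmeas.aestronglyMeasurable ?_
    refine ae_restrict_of_forall_mem measurableSet_ball fun x hx => ?_
    rw [Real.norm_eq_abs, abs_of_nonneg (hg0 x)]
    exact le_trans (hgle x) (le_trans (le_abs_self _) (hC x (ball_subset_closedBall hx)))
  have hae := (integral_eq_zero_iff_of_nonneg_ae
    (Filter.Eventually.of_forall fun x => hg0 x) hgint).mp part1
  have hms : MeasurableSet {x : EuclideanSpace ℝ (Fin n) | g x ≠ 0} := by
    have := hgmeas (measurableSet_singleton (0:ℝ))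
    exact this.compl
  have hnull : volume ({x | g x ≠ 0} ∩ ball x₀ r) = 0 := by
    have hae' : ∀ᵐ x ∂(volume.restrict (ball x₀ r)), g x = 0 := by
      filter_upwards [hae] with x hx using hx
    have h1 := ae_iff.mp hae'
    rw [Measure.restrict_apply hms] at h1
    · exact h1
  intro p hpB hFp
  have hFcont : Continuous (gradient u) := grad_continuous u (hu.of_le (by norm_num))
  set φ : EuclideanSpace ℝ (Fin n) → ℝ := fun x => hessFrobSq u x -
      ∑ k, ⟪gradient (fun y => gradient u y k) x,
        ‖gradient u x‖⁻¹ • gradient u x⟫_ℝ ^ 2 with hφ_def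
  have hφg : ∀ x, gradient u x ≠ 0 → g x = φ x := by
    intro x hx
    rw [hg_def, hφ_def]
    dsimp only
    congr 1
    rw [norm_sq_coords]
    exact Finset.sum_congr rfl fun k _ => by rw [gradN_coord u hu x hx k]
  have hφcont : ContinuousAt φ p := by
    rw [hφ_def]
    apply ContinuousAt.sub (hessFrobSq_cont u hu).continuousAt
    apply tendsto_finset_sum
    intro k _
    apply ContinuousAt.pow
    apply ContinuousAt.inner ((Hcont u hu k).continuousAt)
    apply ContinuousAt.fun_smul
    · exact (hFcont.norm.continuousAt).inv₀ (by simpa using hFp)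
    · exact hFcont.continuousAt
  have hgp : g p = 0 := by
    by_contra hne
    have hpos : 0 < g p := lt_of_le_of_ne (hg0 p) (Ne.symm hne)
    have hφp : 0 < φ p := by rw [← hφg p hFp]; exact hpos
    have hev1 : ∀ᶠ x in nhds p, 0 < φ x := hφcont.eventually (eventually_gt_nhds hφp)
    have hev2 : ∀ᶠ x in nhds p, gradient u x ≠ 0 := hFcont.continuousAt.eventually_ne hFp
    have hev3 : ∀ᶠ x in nhds p, x ∈ ball x₀ r :=
      Filter.eventually_iff.mpr (isOpen_ball.mem_nhds hpB)
    have hev : ∀ᶠ x in nhds p, g x ≠ 0 ∧ x ∈ ball x₀ r := by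
      filter_upwards [hev1, hev2, hev3] with x h1 h2 h3
      refine ⟨?_, h3⟩
      rw [hφg x h2]
      exact ne_of_gt h1
    obtain ⟨δ, hδpos, hδ⟩ := Metric.eventually_nhds_iff_ball.mp hev
    have hsub : ball p δ ⊆ {x | g x ≠ 0} ∩ ball x₀ r :=
      fun x hx => ⟨(hδ x hx).1, (hδ x hx).2⟩
    have h0 : volume (ball p δ) = 0 := measure_mono_null hsub hnull
    exact (measure_ball_pos volume p hδpos).ne' h0
  have hφp0 : φ p = 0 := by rw [← hφg p hFp]; exact hgp
  have hterm : ∀ k : Fin n, ‖gradient (fun y => gradient u y k) p‖ ^ 2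
      = ⟪gradient (fun y => gradient u y k) p,
          ‖gradient u p‖⁻¹ • gradient u p⟫_ℝ ^ 2 := by
    have hsum : ∑ k : Fin n, (‖gradient (fun y => gradient u y k) p‖ ^ 2
        - ⟪gradient (fun y => gradient u y k) p,
            ‖gradient u p‖⁻¹ • gradient u p⟫_ℝ ^ 2) = 0 := by
      rw [Finset.sum_sub_distrib]
      have h1 : ∑ k : Fin n, ‖gradient (fun y => gradient u y k) p‖ ^ 2
          = hessFrobSq u p := rfl
      rw [h1]
      rw [hφ_def] at hφp0
      exact hφp0
    intro k
    have hnn : ∀ k ∈ Finset.univ, (0:ℝ) ≤ ‖gradient (fun y => gradient u y k) p‖ ^ 2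
        - ⟪gradient (fun y => gradient u y k) p,
            ‖gradient u p‖⁻¹ • gradient u p⟫_ℝ ^ 2 := by
      intro k _
      have := cs_sq_le (gradient (fun y => gradient u y k) p)
        (‖gradient u p‖⁻¹ • gradient u p) (unit_v u p hFp)
      linarith
    have := (Finset.sum_eq_zero_iff_of_nonneg hnn).mp hsum k (Finset.mem_univ k)
    linarith
  intro k
  rcases eq_or_ne (gradient (fun y => gradient u y k) p) 0 with h0 | h0
  · exact ⟨0, by rw [h0]; simp⟩
  · have hv0 : (‖gradient u p‖⁻¹ • gradient u p : EuclideanSpace ℝ (Fin n)) ≠ 0 := by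
      intro h
      have h1 := unit_v u p hFp
      rw [h] at h1
      simp at h1
    have habs : ‖⟪(‖gradient u p‖⁻¹ • gradient u p : EuclideanSpace ℝ (Fin n)),
        gradient (fun y => gradient u y k) p⟫_ℝ‖
        = ‖(‖gradient u p‖⁻¹ • gradient u p : EuclideanSpace ℝ (Fin n))‖
          * ‖gradient (fun y => gradient u y k) p‖ := by
      rw [unit_v u p hFp, one_mul, Real.norm_eq_abs, real_inner_comm]
      have h2 := hterm k
      have h3 : |⟪gradient (fun y => gradient u y k) p,
          ‖gradient u p‖⁻¹ • gradient u p⟫_ℝ|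
          = |‖gradient (fun y => gradient u y k) p‖| := by
        rw [← sq_eq_sq_iff_abs_eq_abs]
        exact h2.symm
      rw [h3, abs_of_nonneg (norm_nonneg _)]
    obtain ⟨c, hc0, hcH⟩ := (norm_inner_eq_norm_iff hv0 h0).mp habs
    refine ⟨c * ‖gradient u p‖⁻¹, ?_⟩
    rw [hcH, smul_smul]
end
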